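/- arXiv:2108.08609 — 2 statements merged into one kernel-verified Lean document; each statement's English description precedes it below -/
import Mathlib

section
/- Let G be a non-bipartite graph whose smallest induced odd cycle has length 2n+1. Then I(G)^{(s)} = I(G)^s for all s ≤ n, where I(G)^{(s)} denotes the s-th symbolic power of the edge ideal. -/
open MvPolynomial

noncomputable section

/-- The integral closure of an ideal `I`: an element `r` belongs to it iff `r·t` is
integral over the Rees algebra `R[It]` inside `R[t]`; equivalently, `r` satisfies an
equation `r^n + a₁ r^{n-1} + ⋯ + aₙ = 0` with `aᵢ ∈ Iⁱ`. -/
def Ideal.intCl {R : Type*} [CommRing R] (I : Ideal R) : Ideal R where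
  carrier := {r | (Polynomial.C r * Polynomial.X : Polynomial R) ∈
      integralClosure (reesAlgebra I) (Polynomial R)}
  zero_mem' := by
    simp only [Set.mem_setOf_eq, map_zero, zero_mul]
    exact Subalgebra.zero_mem _
  add_mem' := by
    intro a b ha hb
    simp only [Set.mem_setOf_eq, map_add, add_mul] at ha hb ⊢
    exact Subalgebra.add_mem _ ha hb
  smul_mem' := by
    intro c x hx
    simp only [Set.mem_setOf_eq] at hx ⊢
    have hmem : (Polynomial.C c : Polynomial R) ∈ reesAlgebra I := by
      rw [← Polynomial.algebraMap_eq]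
      exact Subalgebra.algebraMap_mem _ c
    have hc : (Polynomial.C c : Polynomial R) ∈
        integralClosure (reesAlgebra I) (Polynomial R) := by
      simpa using Subalgebra.algebraMap_mem
        (integralClosure (reesAlgebra I) (Polynomial R)) (⟨Polynomial.C c, hmem⟩ : reesAlgebra I)
    have heq : Polynomial.C (c • x) * Polynomial.X
        = Polynomial.C c * (Polynomial.C x * Polynomial.X) := by
      rw [smul_eq_mul, Polynomial.C_mul, mul_assoc]
    rw [heq]
    exact mul_mem hc hx

/-- The `s`-th symbolic power of an ideal, as the intersection of the `s`-th powers of its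
minimal primes (the appropriate definition for radical, e.g. squarefree monomial, ideals). -/
def Ideal.symbPow {R : Type*} [CommRing R] (I : Ideal R) (s : ℕ) : Ideal R :=
  ⨅ p ∈ I.minimalPrimes, p ^ s

section Koszul

variable (k : Type*) [Field k] (σ : Type*) [Fintype σ] [LinearOrder σ]

/-- The Koszul differential (on the Koszul complex of the variables, with coefficients in
the polynomial ring). -/
def koszulD : ∀ i : ℕ,
    (({s : Finset σ // s.card = i} → MvPolynomial σ k) →ₗ[k]
      ({s : Finset σ // s.card = i - 1} → MvPolynomial σ k))
  | 0 => 0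
  | (i + 1) =>
    LinearMap.pi fun t : {s : Finset σ // s.card = i} =>
      ∑ x ∈ (t.1ᶜ).attach,
        ((-1 : k) ^ ((t.1.filter (fun a => a < x.1)).card)) •
          ((LinearMap.mulLeft k (X x.1 : MvPolynomial σ k)).comp
            (LinearMap.proj (⟨insert x.1 t.1, by
              rw [Finset.card_insert_of_notMem (Finset.mem_compl.mp x.2), t.2]⟩ :
                {s : Finset σ // s.card = i + 1})))

variable {k σ}

/-- The degree `j` strand of homological degree `i` of the Koszul complex with coefficients
in the ideal `I`. -/
def koszulStrand (I : Ideal (MvPolynomial σ k)) (i j : ℕ) :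
    Submodule k ({s : Finset σ // s.card = i} → MvPolynomial σ k) :=
  if i ≤ j then
    Submodule.pi Set.univ fun _ =>
      (Submodule.restrictScalars k (I : Submodule (MvPolynomial σ k) (MvPolynomial σ k))) ⊓
        homogeneousSubmodule σ k (j - i)
  else ⊥

/-- The degree `j` cycles in homological degree `i` of the Koszul complex with values in `I`. -/
def koszulCycles (I : Ideal (MvPolynomial σ k)) (i j : ℕ) :
    Submodule k ({s : Finset σ // s.card = i} → MvPolynomial σ k) :=
  koszulStrand I i j ⊓ LinearMap.ker (koszulD k σ i)

/-- The graded Betti number `β_{i,j}(I) = dim_k (Tor_i(I,k))_j`, computed via the Koszul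
complex. -/
def gradedBetti (I : Ideal (MvPolynomial σ k)) (i j : ℕ) : Cardinal :=
  Module.rank k
    ((↥(koszulCycles I i j)) ⧸
      (Submodule.comap (koszulCycles I i j).subtype
        (Submodule.map (koszulD k σ (i + 1)) (koszulStrand I (i + 1) j))))

/-- The Castelnuovo–Mumford regularity of an ideal: `max { j - i : β_{i,j}(I) ≠ 0 }`. -/
def reg (I : Ideal (MvPolynomial σ k)) : ℤ :=
  sSup {d : ℤ | ∃ i j : ℕ, gradedBetti I i j ≠ 0 ∧ d = (j : ℤ) - (i : ℤ)}

end Koszul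

section Graphs

variable (k : Type*) [Field k] {V : Type*}

/-- The edge ideal of a graph. -/
def edgeIdeal (G : SimpleGraph V) : Ideal (MvPolynomial V k) :=
  Ideal.span {p | ∃ u v, G.Adj u v ∧ p = X u * X v}

/-- The edge ideal of the induced subgraph of `G` on a set `S` of vertices. -/
def edgeIdealOn (G : SimpleGraph V) (S : Set V) : Ideal (MvPolynomial V k) :=
  Ideal.span {p | ∃ u v, G.Adj u v ∧ u ∈ S ∧ v ∈ S ∧ p = X u * X v}

variable {k}

/-- A cycle of length `m` in `G`, given by an injective map from `ZMod m` whose consecutive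
values are adjacent. -/
def IsCycleMap (G : SimpleGraph V) (m : ℕ) (c : ZMod m → V) : Prop :=
  Function.Injective c ∧ ∀ i, G.Adj (c i) (c (i + 1))

/-- An induced cycle: a cycle with no chords. -/
def IsInducedCycleMap (G : SimpleGraph V) (m : ℕ) (c : ZMod m → V) : Prop :=
  IsCycleMap G m c ∧ ∀ i j : ZMod m, G.Adj (c i) (c j) → j = i + 1 ∨ i = j + 1

/-- A bow in `G`: two (odd) cycles which are vertex-disjoint and at distance at least two
(no edge between them). -/
def IsBow (G : SimpleGraph V) {p q : ℕ} (c₁ : ZMod p → V) (c₂ : ZMod q → V) : Prop :=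
  IsCycleMap G p c₁ ∧ IsCycleMap G q c₂ ∧ (∀ i j, c₁ i ≠ c₂ j) ∧
    ∀ i j, ¬ G.Adj (c₁ i) (c₂ j)

/-- The induced matching number of the induced subgraph of `G` on the vertex set `S`. -/
def inducedMatchingNumber (G : SimpleGraph V) (S : Set V) : ℕ :=
  sSup {r | ∃ M : Finset (V × V), M.card = r ∧
    (∀ e ∈ M, e.1 ∈ S ∧ e.2 ∈ S ∧ G.Adj e.1 e.2) ∧
    ∀ e ∈ M, ∀ f ∈ M, e ≠ f →
      ∀ u ∈ ({e.1, e.2} : Set V), ∀ w ∈ ({f.1, f.2} : Set V), u ≠ w ∧ ¬ G.Adj u w}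

/-- The vertex cover number of a graph. -/
def coverNumber [Fintype V] (G : SimpleGraph V) : ℕ :=
  sInf {r | ∃ C : Finset V, C.card = r ∧ ∀ u v, G.Adj u v → u ∈ C ∨ v ∈ C}

/-- The parallelization `G^v` of a graph `G`: the vertex `i` is deleted when `v i = 0` and
duplicated `v i - 1` times when `v i ≥ 1`. -/
def parallelization (G : SimpleGraph V) (v : V → ℕ) : SimpleGraph ((i : V) × Fin (v i)) where
  Adj a b := G.Adj a.1 b.1
  symm := ⟨fun _ _ h => h.symm⟩
  loopless := ⟨fun a h => G.loopless.irrefl a.1 h⟩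

end Graphs


open Pointwise





section Aux

variable {k : Type*} [Field k] {V : Type*}

/-- A vertex cover. -/
def IsCoverA {V : Type*} (G : SimpleGraph V) (C : Set V) : Prop :=
  ∀ u v, G.Adj u v → u ∈ C ∨ v ∈ C

/-- A minimal vertex cover. -/
def IsMinCoverA {V : Type*} (G : SimpleGraph V) (C : Set V) : Prop :=
  IsCoverA G C ∧ ∀ C' ⊆ C, IsCoverA G C' → C' = C

open Classical in
/-- the `C`-weight of an exponent vector -/
def wtC {V : Type*} (C : Set V) (b : V →₀ ℕ) : ℕ :=
  b.sum fun v m => if v ∈ C then m else 0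

lemma wtC_add {C : Set V} (b c : V →₀ ℕ) : wtC C (b + c) = wtC C b + wtC C c := by
  classical
  unfold wtC
  rw [Finsupp.sum_add_index]
  · intro v _; simp
  · intro v _ m n; by_cases h : v ∈ C <;> simp [h]

open Classical in
lemma wtC_eq_sum {C : Set V} (b : V →₀ ℕ) :
    wtC C b = ∑ v ∈ b.support, if v ∈ C then b v else 0 := by
  rfl

lemma wtC_mono {C C' : Set V} (h : C' ⊆ C) (b : V →₀ ℕ) : wtC C' b ≤ wtC C b := by
  classical
  rw [wtC_eq_sum, wtC_eq_sum]
  apply Finset.sum_le_sum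
  intro v _
  by_cases hv : v ∈ C'
  · simp [hv, h hv]
  · simp [hv]

/-- the prime generated by the variables in `C` -/
def coverPrime (k : Type*) [Field k] {V : Type*} (C : Set V) : Ideal (MvPolynomial V k) :=
  Ideal.span ((fun v => (X v : MvPolynomial V k)) '' C)

open Classical in
/-- the algebra map killing the variables in `C` -/
def killC (k : Type*) [Field k] {V : Type*} (C : Set V) :
    MvPolynomial V k →ₐ[k] MvPolynomial V k :=
  aeval (fun v => if v ∈ C then 0 else X v)

lemma killC_monomial_free {C : Set V} (b : V →₀ ℕ) (a : k)
    (h : ∀ v ∈ b.support, v ∉ C) : killC k C (monomial b a) = monomial b a := by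
  classical
  rw [killC, aeval_monomial, monomial_eq]
  congr 1
  rw [Finsupp.prod, Finsupp.prod]
  apply Finset.prod_congr rfl
  intro v hv
  simp [h v hv]

lemma killC_monomial_touch {C : Set V} (b : V →₀ ℕ) (a : k) {v : V}
    (hv : v ∈ b.support) (hvC : v ∈ C) : killC k C (monomial b a) = 0 := by
  classical
  rw [killC, aeval_monomial]
  rw [Finsupp.prod]
  rw [Finset.prod_eq_zero hv]
  · simp
  · simp only [hvC, if_true]
    exact zero_pow (Finsupp.mem_support_iff.mp hv)

lemma mono_mem_coverPrime {C : Set V} {b : V →₀ ℕ} (a : k) {v : V}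
    (hvC : v ∈ C) (hv : b v ≠ 0) : monomial b a ∈ coverPrime k C := by
  have hle : Finsupp.single v 1 ≤ b := by
    rw [Finsupp.single_le_iff]
    omega
  have : monomial b a = X v * monomial (b - Finsupp.single v 1) a := by
    rw [X, monomial_mul, one_mul, add_tsub_cancel_of_le hle]
  rw [this]
  exact Ideal.mul_mem_right _ _ (Ideal.subset_span ⟨v, hvC, rfl⟩)

lemma killC_ker {C : Set V} : RingHom.ker (killC k C).toRingHom = coverPrime k C := by
  classical
  apply le_antisymm
  · intro f hf
    rw [RingHom.mem_ker] at hf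
    have hf' : killC k C f = 0 := hf
    have hsum := (as_sum f)
    have hkill : (killC k C) f
        = ∑ b ∈ f.support.filter (fun b => ∀ v ∈ b.support, v ∉ C), monomial b (coeff b f) := by
      conv_lhs => rw [hsum]
      rw [map_sum, Finset.sum_filter]
      apply Finset.sum_congr rfl
      intro b _
      by_cases h : ∀ v ∈ b.support, v ∉ C
      · rw [killC_monomial_free b _ h, if_pos h]
      · push_neg at h
        obtain ⟨v, hv, hvC⟩ := h
        rw [killC_monomial_touch b _ hv hvC, if_neg]
        push_neg
        exact ⟨v, hv, hvC⟩
    rw [hf'] at hkill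
    have : f = ∑ b ∈ f.support.filter (fun b => ¬ ∀ v ∈ b.support, v ∉ C),
        monomial b (coeff b f) := by
      conv_lhs => rw [hsum]
      rw [← Finset.sum_filter_add_sum_filter_not f.support (fun b => ∀ v ∈ b.support, v ∉ C)]
      rw [← hkill, zero_add]
    rw [this]
    apply Ideal.sum_mem
    intro b hb
    rw [Finset.mem_filter] at hb
    push_neg at hb
    obtain ⟨v, hv, hvC⟩ := hb.2
    exact mono_mem_coverPrime _ hvC (Finsupp.mem_support_iff.mp hv)
  · rw [coverPrime, Ideal.span_le]
    rintro p ⟨v, hv, rfl⟩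
    rw [SetLike.mem_coe, RingHom.mem_ker]
    show killC k C (X v) = 0
    rw [killC, aeval_X, if_pos hv]

lemma X_not_mem_coverPrime {C : Set V} {v : V} (hv : v ∉ C) :
    (X v : MvPolynomial V k) ∉ coverPrime k C := by
  rw [← killC_ker]
  intro h
  rw [RingHom.mem_ker] at h
  have h' : killC k C (X v) = 0 := h
  have : killC k C (X v) = X v := by rw [killC, aeval_X, if_neg hv]
  rw [this] at h'
  exact X_ne_zero v h'

lemma coverPrime_isPrime {C : Set V} : (coverPrime k C).IsPrime := by
  rw [← killC_ker]
  exact RingHom.ker_isPrime _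

lemma edgeIdeal_le_coverPrime {G : SimpleGraph V} {C : Set V} (hC : IsCoverA G C) :
    edgeIdeal k G ≤ coverPrime k C := by
  rw [edgeIdeal, Ideal.span_le]
  rintro p ⟨u, v, huv, rfl⟩
  rcases hC u v huv with h | h
  · exact Ideal.mul_mem_right _ _ (Ideal.subset_span ⟨u, h, rfl⟩)
  · exact Ideal.mul_mem_left _ _ (Ideal.subset_span ⟨v, h, rfl⟩)

lemma exists_private_edge {G : SimpleGraph V} {C : Set V} (hC : IsMinCoverA G C) {u : V}
    (hu : u ∈ C) : ∃ w, G.Adj u w ∧ w ∉ C := by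
  have hnc : ¬ IsCoverA G (C \ {u}) := by
    intro h
    have := hC.2 _ Set.diff_subset h
    rw [← this] at hu
    exact hu.2 rfl
  rw [IsCoverA] at hnc
  push_neg at hnc
  obtain ⟨x, y, hxy, hx, hy⟩ := hnc
  rcases hC.1 x y hxy with h | h
  · have hx' : x = u := by
      by_contra hne
      exact hx ⟨h, hne⟩
    subst hx'
    refine ⟨y, hxy, fun hyC => ?_⟩
    have : y = x := by
      by_contra hne
      exact hy ⟨hyC, hne⟩
    subst this
    exact G.loopless.irrefl _ hxy
  · have hy' : y = u := by
      by_contra hne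
      exact hy ⟨h, hne⟩
    subst hy'
    refine ⟨x, hxy.symm, fun hxC => ?_⟩
    have : x = y := by
      by_contra hne
      exact hx ⟨hxC, hne⟩
    subst this
    exact G.loopless.irrefl _ hxy

lemma coverPrime_mem_minimalPrimes {G : SimpleGraph V} {C : Set V} (hC : IsMinCoverA G C) :
    coverPrime k C ∈ (edgeIdeal k G).minimalPrimes := by
  constructor
  · exact ⟨coverPrime_isPrime, edgeIdeal_le_coverPrime hC.1⟩
  · rintro q ⟨hq, hIq⟩ hqle
    rw [coverPrime, Ideal.span_le]
    rintro p ⟨u, hu, rfl⟩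
    obtain ⟨w, huw, hwC⟩ := exists_private_edge hC hu
    have hmem : (X u : MvPolynomial V k) * X w ∈ q := hIq (Ideal.subset_span ⟨u, w, huw, rfl⟩)
    rcases hq.mem_or_mem hmem with h | h
    · exact h
    · exact absurd (hqle h) (X_not_mem_coverPrime hwC)

end Aux
section Aux2

variable {k : Type*} [Field k] {V : Type*}

/-- the ideal of polynomials all of whose monomials have `C`-weight at least `j` -/
def Wgt (k : Type*) [Field k] {V : Type*} (C : Set V) (j : ℕ) : Ideal (MvPolynomial V k) where
  carrier := {f | ∀ b ∈ f.support, j ≤ wtC C b}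
  zero_mem' := by simp
  add_mem' := by
    classical
    intro f g hf hg b hb
    rcases Finset.mem_union.mp (Finsupp.support_add hb) with h | h
    · exact hf b h
    · exact hg b h
  smul_mem' := by
    classical
    intro c f hf b hb
    rw [smul_eq_mul] at hb
    have := MvPolynomial.support_mul c f hb
    rw [Finset.mem_add] at this
    obtain ⟨d, _, e, he, rfl⟩ := this
    rw [wtC_add]
    exact (hf e he).trans (Nat.le_add_left _ _)

lemma mem_Wgt {C : Set V} {j : ℕ} {f : MvPolynomial V k} :
    f ∈ Wgt k C j ↔ ∀ b ∈ f.support, j ≤ wtC C b := Iff.rfl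

lemma Wgt_mul_le {C : Set V} {i j : ℕ} : Wgt k C i * Wgt k C j ≤ Wgt k C (i + j) := by
  classical
  rw [Ideal.mul_le]
  intro f hf g hg
  rw [mem_Wgt] at hf hg ⊢
  intro b hb
  have := MvPolynomial.support_mul f g hb
  rw [Finset.mem_add] at this
  obtain ⟨d, hd, e, he, rfl⟩ := this
  rw [wtC_add]
  exact add_le_add (hf d hd) (hg e he)

lemma coverPrime_le_Wgt_one {C : Set V} : coverPrime k C ≤ Wgt k C 1 := by
  classical
  rw [coverPrime, Ideal.span_le]
  rintro p ⟨v, hv, rfl⟩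
  rw [SetLike.mem_coe, mem_Wgt]
  intro b hb
  rw [MvPolynomial.support_X] at hb
  rw [Finset.mem_singleton] at hb
  subst hb
  rw [wtC_eq_sum]
  rw [Finsupp.support_single_ne_zero v one_ne_zero]
  simp [hv]

lemma coverPrime_pow_le_Wgt {C : Set V} (s : ℕ) : coverPrime k C ^ s ≤ Wgt k C s := by
  induction s with
  | zero => intro f _; rw [mem_Wgt]; intro b _; exact Nat.zero_le _
  | succ j ih =>
      calc coverPrime k C ^ (j+1) = coverPrime k C ^ j * coverPrime k C := by rw [pow_succ]
      _ ≤ Wgt k C j * Wgt k C 1 := Ideal.mul_mono ih coverPrime_le_Wgt_one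
      _ ≤ Wgt k C (j + 1) := Wgt_mul_le

lemma wt_ge_of_mem_pow {C : Set V} {s : ℕ} {f : MvPolynomial V k}
    (hf : f ∈ coverPrime k C ^ s) {b : V →₀ ℕ} (hb : b ∈ f.support) : s ≤ wtC C b :=
  mem_Wgt.mp (coverPrime_pow_le_Wgt s hf) b hb

/-- the exponent vector consumed by a list of edges -/
def esum {V : Type*} (L : List (V × V)) : V →₀ ℕ :=
  (L.map fun p => Finsupp.single p.1 1 + Finsupp.single p.2 1).sum

lemma esum_nil {V : Type*} : esum ([] : List (V × V)) = 0 := rfl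

lemma esum_cons {V : Type*} (p : V × V) (L : List (V × V)) :
    esum (p :: L) = Finsupp.single p.1 1 + Finsupp.single p.2 1 + esum L := by
  rw [esum, List.map_cons, List.sum_cons, esum]

lemma mono_esum_mem_pow {G : SimpleGraph V} (L : List (V × V))
    (hL : ∀ p ∈ L, G.Adj p.1 p.2) :
    (monomial (esum L) 1 : MvPolynomial V k) ∈ edgeIdeal k G ^ L.length := by
  induction L with
  | nil => rw [esum_nil, List.length_nil, pow_zero, Ideal.one_eq_top]; trivial
  | cons p L ih =>
      rw [esum_cons, List.length_cons, pow_succ']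
      have h1 : (monomial (Finsupp.single p.1 1 + Finsupp.single p.2 1) 1 : MvPolynomial V k)
          = X p.1 * X p.2 := by
        rw [X, X, monomial_mul, one_mul]
      have : (monomial (Finsupp.single p.1 1 + Finsupp.single p.2 1 + esum L) 1 :
          MvPolynomial V k) = (X p.1 * X p.2) * monomial (esum L) 1 := by
        rw [← h1, monomial_mul, one_mul]
      rw [this]
      exact Ideal.mul_mem_mul (Ideal.subset_span ⟨p.1, p.2, hL p (List.mem_cons_self), rfl⟩)
        (ih fun q hq => hL q (List.mem_cons_of_mem p hq))

lemma mono_mem_edgeIdeal_pow {G : SimpleGraph V} {b : V →₀ ℕ} (a : k) {s : ℕ}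
    (L : List (V × V)) (hlen : L.length = s) (hL : ∀ p ∈ L, G.Adj p.1 p.2)
    (hle : esum L ≤ b) : (monomial b a : MvPolynomial V k) ∈ edgeIdeal k G ^ s := by
  have : (monomial b a : MvPolynomial V k)
      = monomial (b - esum L) a * monomial (esum L) 1 := by
    rw [monomial_mul, mul_one, tsub_add_cancel_of_le hle]
  rw [this, ← hlen]
  exact Ideal.mul_mem_left _ _ (mono_esum_mem_pow L hL)

/-- every vertex cover contains a minimal vertex cover (Zorn) -/
lemma exists_minCover_subset {V : Type*} (G : SimpleGraph V) (C : Set V) (hC : IsCoverA G C) :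
    ∃ C', C' ⊆ C ∧ IsMinCoverA G C' := by
  classical
  set Ind : Set (Set V) := {S | ∀ u ∈ S, ∀ v ∈ S, ¬ G.Adj u v} with hInd
  have hCc : Cᶜ ∈ Ind := by
    intro u hu v hv hadj
    rcases hC u v hadj with h | h
    · exact hu h
    · exact hv h
  obtain ⟨S, hSsub, hSmax⟩ := zorn_subset_nonempty Ind (fun c hcsub hchain hcne => by
      refine ⟨⋃₀ c, ?_, fun s hs => Set.subset_sUnion_of_mem hs⟩
      intro u hu v hv hadj
      obtain ⟨s1, hs1, hu1⟩ := hu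
      obtain ⟨s2, hs2, hv2⟩ := hv
      rcases hchain.total hs1 hs2 with h | h
      · exact hcsub hs2 u (h hu1) v hv2 hadj
      · exact hcsub hs1 u hu1 v (h hv2) hadj) Cᶜ hCc
  refine ⟨Sᶜ, ?_, ?_, ?_⟩
  · exact Set.compl_subset_comm.mpr hSsub
  · intro u v hadj
    by_contra h
    push_neg at h
    rw [Set.notMem_compl_iff, Set.notMem_compl_iff] at h
    exact hSmax.1 u h.1 v h.2 hadj
  · intro C'' hsub hcov
    by_contra hne
    obtain ⟨x, hxS, hxC⟩ : ∃ x, x ∈ Sᶜ ∧ x ∉ C'' := by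
      by_contra h
      push_neg at h
      exact hne (le_antisymm hsub h)
    have hind : insert x S ∈ Ind := by
      intro u hu v hv hadj
      rcases hu with rfl | hu
      · rcases hv with rfl | hv
        · exact G.loopless.irrefl _ hadj
        · rcases hcov u v hadj with h | h
          · exact hxC h
          · exact (hsub h) hv
      · rcases hv with rfl | hv
        · rcases hcov u v hadj with h | h
          · exact (hsub h) hu
          · exact hxC h
        · exact hSmax.1 u hu v hv hadj
    have := hSmax.2 hind (Set.subset_insert x S)
    exact hxS (this (Set.mem_insert x S))

end Aux2





section Walks

variable {V : Type*} {G : SimpleGraph V}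

/-- a closed walk of length `ℓ` -/
def ClosedWalk (G : SimpleGraph V) (ℓ : ℕ) (w : ℕ → V) : Prop :=
  (∀ i < ℓ, G.Adj (w i) (w (i + 1))) ∧ w ℓ = w 0

lemma no_short_odd_walk (n : ℕ)
    (hmin : ∀ (m : ℕ) (c : ZMod (2 * m + 1) → V),
      IsInducedCycleMap G (2 * m + 1) c → n ≤ m)
    (ℓ : ℕ) (hodd : Odd ℓ) (hle : ℓ ≤ 2 * n - 1) (w : ℕ → V)
    (hw : ClosedWalk G ℓ w) : False := by
  classical
  have hA : ∃ ℓ', Odd ℓ' ∧ ∃ w', ClosedWalk G ℓ' w' := ⟨ℓ, hodd, w, hw⟩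
  obtain ⟨ℓ₀, hodd0, ⟨w0, hadj0, hcl0⟩, hminA, hle0⟩ :
      ∃ ℓ₀, Odd ℓ₀ ∧ (∃ w', ClosedWalk G ℓ₀ w') ∧
        (∀ ℓ' < ℓ₀, ¬ (Odd ℓ' ∧ ∃ w', ClosedWalk G ℓ' w')) ∧ ℓ₀ ≤ ℓ :=
    ⟨Nat.find hA, (Nat.find_spec hA).1, (Nat.find_spec hA).2,
      fun ℓ' h => Nat.find_min hA h, Nat.find_min' hA ⟨hodd, w, hw⟩⟩
  have h1 : ℓ₀ ≠ 1 := by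
    intro h
    have := hadj0 0 (by omega)
    rw [show (0+1) = ℓ₀ by omega, hcl0] at this
    exact G.loopless.irrefl _ this
  have h3 : 3 ≤ ℓ₀ := by
    obtain ⟨m, hm⟩ := hodd0
    omega
  -- injectivity on [0, ℓ₀)
  have hinj : ∀ i j, i < j → j < ℓ₀ → w0 i ≠ w0 j := by
    intro i j hij hj heq
    set d := j - i with hd
    have hd1 : 1 ≤ d := by omega
    have hw1 : ClosedWalk G d (fun t => w0 (i + t)) := by
      constructor
      · intro t ht
        beta_reduce
        rw [show i + (t + 1) = (i + t) + 1 by omega]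
        exact hadj0 (i + t) (by omega)
      · beta_reduce
        rw [show i + d = j by omega, show i + 0 = i from rfl]
        exact heq.symm
    have hw2 : ClosedWalk G (ℓ₀ - d) (fun t => if t ≤ i then w0 t else w0 (t + d)) := by
      constructor
      · intro t ht
        beta_reduce
        by_cases h1' : t + 1 ≤ i
        · rw [if_pos (by omega), if_pos h1']
          exact hadj0 t (by omega)
        · by_cases h2' : t ≤ i
          · -- t = i
            have hti : t = i := by omega
            rw [if_pos h2', if_neg h1', hti, heq, show i + 1 + d = j + 1 by omega]
            exact hadj0 j hj
          · rw [if_neg h2', if_neg h1']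
            rw [show t + 1 + d = (t + d) + 1 by omega]
            exact hadj0 (t + d) (by omega)
      · have hgt : ¬ (ℓ₀ - d ≤ i) := by omega
        beta_reduce
        rw [if_neg hgt, if_pos (Nat.zero_le i), show ℓ₀ - d + d = ℓ₀ by omega]
        exact hcl0
    rcases Nat.even_or_odd d with hev | hodd'
    · have hodd'' : Odd (ℓ₀ - d) := by
        obtain ⟨m, hm⟩ := hodd0
        obtain ⟨p, hp⟩ := hev
        exact ⟨m - p, by omega⟩
      exact hminA (ℓ₀ - d) (by omega) ⟨hodd'', _, hw2⟩
    · exact hminA d (by omega) ⟨hodd', _, hw1⟩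
  -- chord-free
  have hchord : ∀ i j, i < j → j < ℓ₀ → G.Adj (w0 i) (w0 j) →
      j = i + 1 ∨ (i = 0 ∧ j = ℓ₀ - 1) := by
    intro i j hij hj hadj
    by_contra hcon
    push_neg at hcon
    obtain ⟨hne1, hne2⟩ := hcon
    set d := j - i with hd
    have hd2 : 2 ≤ d := by omega
    have hdle : d ≤ ℓ₀ - 2 := by
      by_contra h
      have : i = 0 ∧ j = ℓ₀ - 1 := by omega
      exact hne2 this.1 this.2
    -- walk 1 : around the chord one way, length d+1
    have hw1 : ClosedWalk G (d + 1) (fun t => if t ≤ d then w0 (i + t) else w0 i) := by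
      constructor
      · intro t ht
        beta_reduce
        by_cases h1' : t + 1 ≤ d
        · rw [if_pos (by omega), if_pos h1']
          rw [show i + (t+1) = (i + t) + 1 by omega]
          exact hadj0 (i + t) (by omega)
        · -- t = d
          have : t = d := by omega
          subst this
          rw [if_pos (le_refl _), if_neg h1', show i + d = j by omega]
          exact hadj.symm
      · beta_reduce
        rw [if_neg (by omega), if_pos (Nat.zero_le _), show i + 0 = i from rfl]
    -- walk 2 : around the chord the other way, length ℓ₀ - d + 1
    set e := ℓ₀ - d with he
    have hw2 : ClosedWalk G (e + 1)
        (fun t => if t ≤ ℓ₀ - j then w0 (j + t) else if t ≤ e then w0 (t - (ℓ₀ - j)) else w0 j) := by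
      constructor
      · intro t ht
        beta_reduce
        by_cases h1' : t + 1 ≤ ℓ₀ - j
        · rw [if_pos (by omega), if_pos h1', show j + (t+1) = (j + t) + 1 by omega]
          exact hadj0 (j + t) (by omega)
        · by_cases h2' : t ≤ ℓ₀ - j
          · -- t = ℓ₀ - j
            have hte : t = ℓ₀ - j := by omega
            rw [if_pos h2', if_neg h1']
            by_cases h3' : t + 1 ≤ e
            · rw [if_pos h3', hte, show j + (ℓ₀ - j) = ℓ₀ by omega, hcl0,
                show ℓ₀ - j + 1 - (ℓ₀ - j) = 1 by omega]
              exact hadj0 0 (by omega)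
            · -- i = 0
              have hi0 : i = 0 := by omega
              rw [if_neg h3', hte, show j + (ℓ₀ - j) = ℓ₀ by omega, hcl0, ← hi0]
              exact hadj
          · by_cases h3' : t + 1 ≤ e
            · rw [if_neg h2', if_neg h1', if_pos (by omega), if_pos h3',
                show t + 1 - (ℓ₀ - j) = (t - (ℓ₀ - j)) + 1 by omega]
              exact hadj0 (t - (ℓ₀ - j)) (by omega)
            · -- t = e
              have hte : t = e := by omega
              rw [if_neg h2', if_neg h1', if_pos (by omega), if_neg h3', hte,
                show e - (ℓ₀ - j) = i by omega]
              exact hadj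
      · beta_reduce
        rw [if_neg (by omega), if_neg (by omega), if_pos (Nat.zero_le _),
          show j + 0 = j from rfl]
    rcases Nat.even_or_odd (d + 1) with hev | hodd'
    · have hodd'' : Odd (e + 1) := by
        obtain ⟨m, hm⟩ := hodd0
        obtain ⟨p, hp⟩ := hev
        exact ⟨m - p + 1, by omega⟩
      exact hminA (e + 1) (by omega) ⟨hodd'', _, hw2⟩
    · exact hminA (d + 1) (by omega) ⟨hodd', _, hw1⟩
  -- build the induced cycle map
  obtain ⟨m, hm⟩ := hodd0
  have hm1 : 1 ≤ m := by omega
  haveI : NeZero (2 * m + 1) := ⟨by omega⟩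
  set c : ZMod (2 * m + 1) → V := fun i => w0 i.val with hc
  have hvlt : ∀ i : ZMod (2 * m + 1), i.val < ℓ₀ := by
    intro i
    rw [hm]
    exact ZMod.val_lt i
  have hcast : ∀ i : ZMod (2 * m + 1), ((i.val : ℕ) : ZMod (2 * m + 1)) = i := by
    intro i
    exact ZMod.natCast_zmod_val i
  have hinj' : Function.Injective c := by
    intro i j hij
    rcases lt_trichotomy i.val j.val with h | h | h
    · exact absurd hij (hinj _ _ h (hvlt j))
    · rw [← hcast i, ← hcast j, h]
    · exact absurd hij.symm (hinj _ _ h (hvlt i))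
  have hadjc : ∀ i : ZMod (2 * m + 1), G.Adj (c i) (c (i + 1)) := by
    intro i
    have hval : (i + 1).val = (i.val + 1) % (2 * m + 1) := by
      haveI : Fact (1 < 2 * m + 1) := ⟨by omega⟩
      rw [ZMod.val_add, ZMod.val_one]
    by_cases h : i.val = 2 * m
    · have : (i + 1).val = 0 := by rw [hval, h]; simp
      rw [hc]
      simp only [this, h]
      rw [← hcl0, hm]
      exact hadj0 (2 * m) (by omega)
    · have hlt : i.val < 2 * m := by have := hvlt i; omega
      have : (i + 1).val = i.val + 1 := by rw [hval, Nat.mod_eq_of_lt (by omega)]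
      rw [hc]
      simp only [this]
      exact hadj0 i.val (by omega)
  have hindc : ∀ i j : ZMod (2 * m + 1), G.Adj (c i) (c j) → j = i + 1 ∨ i = j + 1 := by
    intro i j hadj
    have hne : i.val ≠ j.val := by
      intro h
      rw [hc] at hadj
      simp only [h] at hadj
      exact G.loopless.irrefl _ hadj
    rcases lt_or_gt_of_ne hne with h | h
    · rcases hchord i.val j.val h (hvlt j) hadj with h' | ⟨h1', h2'⟩
      · left
        rw [← hcast j, h', Nat.cast_add, Nat.cast_one, hcast i]
      · right
        rw [← hcast i, ← hcast j, h1', h2', hm]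
        rw [show 2 * m + 1 - 1 = 2 * m by omega]
        rw [Nat.cast_zero]
        rw [show ((2 * m : ℕ) : ZMod (2 * m + 1)) + 1 = ((2 * m + 1 : ℕ) : ZMod (2 * m + 1)) by
          push_cast; ring]
        rw [ZMod.natCast_self]
    · rcases hchord j.val i.val h (hvlt i) hadj.symm with h' | ⟨h1', h2'⟩
      · right
        rw [← hcast i, h', Nat.cast_add, Nat.cast_one, hcast j]
      · left
        rw [← hcast i, ← hcast j, h1', h2', hm]
        rw [show 2 * m + 1 - 1 = 2 * m by omega]
        rw [Nat.cast_zero]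
        rw [show ((2 * m : ℕ) : ZMod (2 * m + 1)) + 1 = ((2 * m + 1 : ℕ) : ZMod (2 * m + 1)) by
          push_cast; ring]
        rw [ZMod.natCast_self]
  have := hmin m c ⟨⟨hinj', hadjc⟩, hindc⟩
  omega

end Walks



section GT

variable {W : Type*} [Fintype W] [DecidableEq W]

/-- a matching, represented as an involution -/
def IsMat (H : SimpleGraph W) (f : W → W) : Prop :=
  Function.Involutive f ∧ ∀ x, f x ≠ x → H.Adj x (f x)

/-- the set of matched vertices -/
def mSet (f : W → W) : Finset W := Finset.univ.filter (fun x => f x ≠ x)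

lemma mem_mSet {f : W → W} {x : W} : x ∈ mSet f ↔ f x ≠ x := by
  rw [mSet, Finset.mem_filter]
  simp

open Classical in
/-- the matching number (counting matched vertices, i.e. twice the number of edges) -/
def nuG (H : SimpleGraph W) : ℕ :=
  Finset.sup (Finset.univ.filter (fun f : W → W => IsMat H f)) (fun f => (mSet f).card)

lemma isMat_id (H : SimpleGraph W) : IsMat H id := ⟨fun _ => rfl, fun x h => absurd rfl h⟩

lemma msize_le_nuG {H : SimpleGraph W} {f : W → W} (hf : IsMat H f) :
    (mSet f).card ≤ nuG H := by
  classical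
  exact Finset.le_sup (f := fun f => (mSet f).card)
    (Finset.mem_filter.mpr ⟨Finset.mem_univ _, hf⟩)

lemma exists_max_mat (H : SimpleGraph W) :
    ∃ f, IsMat H f ∧ (mSet f).card = nuG H := by
  classical
  obtain ⟨f, hf, hsup⟩ := Finset.exists_mem_eq_sup
    (Finset.univ.filter (fun f : W → W => IsMat H f))
    ⟨id, by simp [isMat_id]⟩ (fun f => (mSet f).card)
  rw [Finset.mem_filter] at hf
  exact ⟨f, hf.2, hsup.symm⟩

lemma even_card_of_invol (f : W → W) (S : Finset W)
    (hmem : ∀ x ∈ S, f x ∈ S) (hinv : ∀ x ∈ S, f (f x) = x) (hne : ∀ x ∈ S, f x ≠ x) :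
    Even S.card := by
  classical
  induction S using Finset.strongInduction with
  | _ S ih =>
    rcases S.eq_empty_or_nonempty with rfl | ⟨x, hx⟩
    · simp
    · have hfx : f x ∈ S := hmem x hx
      have hxfx : f x ≠ x := hne x hx
      set S' := (S.erase x).erase (f x) with hS'
      have hsub : S' ⊂ S := by
        apply Finset.ssubset_of_subset_of_ssubset
          (Finset.erase_subset _ _) (Finset.erase_ssubset hx)
      have hcard : S'.card = S.card - 2 := by
        rw [hS', Finset.card_erase_of_mem (Finset.mem_erase.mpr ⟨hxfx, hfx⟩),
          Finset.card_erase_of_mem hx]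
        omega
      have hmem' : ∀ y ∈ S', f y ∈ S' := by
        intro y hy
        rw [hS', Finset.mem_erase, Finset.mem_erase] at hy ⊢
        obtain ⟨hyfx, hyx, hyS⟩ := hy
        refine ⟨?_, ?_, hmem y hyS⟩
        · intro h
          exact hyx (by rw [← hinv y hyS, h, hinv x hx])
        · intro h
          exact hyfx (by rw [← hinv y hyS, h])
      have hinv' : ∀ y ∈ S', f (f y) = y := fun y hy =>
        hinv y (Finset.mem_of_mem_erase (Finset.mem_of_mem_erase hy))
      have hne' : ∀ y ∈ S', f y ≠ y := fun y hy =>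
        hne y (Finset.mem_of_mem_erase (Finset.mem_of_mem_erase hy))
      have := ih S' hsub hmem' hinv' hne'
      have h2 : 2 ≤ S.card := by
        have : ({x, f x} : Finset W).card = 2 := by
          rw [Finset.card_pair (Ne.symm hxfx)]
        rw [← this]
        apply Finset.card_le_card
        intro y hy
        rcases Finset.mem_insert.mp hy with rfl | hy
        · exact hx
        · rw [Finset.mem_singleton] at hy
          subst hy
          exact hfx
      obtain ⟨p, hp⟩ := this
      exact ⟨p + 1, by omega⟩

lemma even_mSet_card {f : W → W} (hf : Function.Involutive f) : Even (mSet f).card := by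
  apply even_card_of_invol f
  · intro x hx
    rw [mem_mSet] at hx ⊢
    rw [hf x]
    exact fun h => hx h.symm
  · intro x _
    exact hf x
  · intro x hx
    rw [mem_mSet] at hx
    exact hx

lemma even_nuG (H : SimpleGraph W) : Even (nuG H) := by
  obtain ⟨f, hf, hc⟩ := exists_max_mat H
  rw [← hc]
  exact even_mSet_card hf.1

/-- adding an edge between two unmatched vertices -/
lemma matAddEdge {H : SimpleGraph W} {f : W → W} (hf : IsMat H f) {x y : W}
    (hx : f x = x) (hy : f y = y) (hxy : H.Adj x y) :
    ∃ g, IsMat H g ∧ mSet g = insert x (insert y (mSet f)) := by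
  classical
  have hne : x ≠ y := hxy.ne
  refine ⟨fun z => if z = x then y else if z = y then x else f z, ⟨?_, ?_⟩, ?_⟩
  · intro z
    by_cases hzx : z = x
    · subst hzx
      simp [hne.symm, if_neg hne]
    · by_cases hzy : z = y
      · subst hzy
        simp [hne]
      · simp only [if_neg hzx, if_neg hzy]
        have h1 : f z ≠ x := fun h => hzx (by rw [← hf.1 z, h, hx])
        have h2 : f z ≠ y := fun h => hzy (by rw [← hf.1 z, h, hy])
        simp only [if_neg h1, if_neg h2]
        exact hf.1 z
  · intro z hz
    by_cases hzx : z = x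
    · subst hzx
      simpa using hxy
    · by_cases hzy : z = y
      · subst hzy
        simp only [if_neg hne.symm, if_pos rfl] at *
        exact hxy.symm
      · simp only [if_neg hzx, if_neg hzy] at hz ⊢
        exact hf.2 z hz
  · ext z
    rw [mem_mSet]
    by_cases hzx : z = x
    · subst hzx
      simp only [if_pos rfl]
      simp [hne.symm, Finset.mem_insert]
    · by_cases hzy : z = y
      · subst hzy
        simp only [if_neg hne.symm, if_pos rfl]
        simp [hne, Finset.mem_insert]
      · simp only [if_neg hzx, if_neg hzy]
        rw [Finset.mem_insert, Finset.mem_insert, mem_mSet]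
        simp [hzx, hzy]

/-- flipping a matching along an alternating path: the key surgery -/
lemma pairUp {H : SimpleGraph W} (x : ℕ → W) (m : ℕ) (hm : m % 2 = 1)
    (hinj : ∀ i ≤ m, ∀ j ≤ m, x i = x j → i = j)
    {f : W → W} (hf : IsMat H f)
    (hadj : ∀ i < m, H.Adj (x i) (x (i + 1)))
    (hclose : ∀ i ≤ m, f (x i) = x i ∨ ∃ j ≤ m, f (x i) = x j) :
    ∃ g, IsMat H g ∧ mSet g = ((Finset.range (m + 1)).image x) ∪ mSet f := by
  classical
  set P := (Finset.range (m + 1)).image x with hP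
  have hmemP : ∀ z, z ∈ P ↔ ∃ i, i ≤ m ∧ x i = z := by
    intro z
    rw [hP, Finset.mem_image]
    constructor
    · rintro ⟨i, hi, rfl⟩
      exact ⟨i, by have := Finset.mem_range.mp hi; omega, rfl⟩
    · rintro ⟨i, hi, rfl⟩
      exact ⟨i, Finset.mem_range.mpr (by omega), rfl⟩
  set g : W → W := fun z =>
    if h : ∃ i, i ≤ m ∧ x i = z then
      (if Nat.find h % 2 = 0 then x (Nat.find h + 1) else x (Nat.find h - 1))
    else f z with hg
  have hgx : ∀ i ≤ m, g (x i) = if i % 2 = 0 then x (i + 1) else x (i - 1) := by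
    intro i hi
    have hex : ∃ i', i' ≤ m ∧ x i' = x i := ⟨i, hi, rfl⟩
    have hspec := Nat.find_spec hex
    have hfind : Nat.find hex = i := hinj _ hspec.1 i hi hspec.2
    rw [hg]
    simp only [dif_pos hex, hfind]
  have hfP : ∀ z, z ∉ P → f z ∉ P := by
    intro z hz hfz
    obtain ⟨j, hj, hxj⟩ := (hmemP _).mp hfz
    have hzj : z = f (x j) := by rw [hxj, hf.1 z]
    rcases hclose j hj with h | ⟨j', hj', h⟩
    · rw [h] at hzj
      exact hz ((hmemP z).mpr ⟨j, hj, hzj.symm⟩)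
    · rw [h] at hzj
      exact hz ((hmemP z).mpr ⟨j', hj', hzj.symm⟩)
  have hgnP : ∀ z, z ∉ P → g z = f z := by
    intro z hz
    rw [hg]
    have : ¬ ∃ i, i ≤ m ∧ x i = z := fun h => hz ((hmemP z).mpr h)
    simp only [dif_neg this]
  have hsucc : ∀ i ≤ m, i % 2 = 0 → i + 1 ≤ m := by intro i hi hev; omega
  have hpred : ∀ i, i % 2 = 1 → 1 ≤ i := by intro i hodd; omega
  have hinv : Function.Involutive g := by
    intro z
    by_cases hz : z ∈ P
    · obtain ⟨i, hi, rfl⟩ := (hmemP z).mp hz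
      rw [hgx i hi]
      by_cases hev : i % 2 = 0
      · rw [if_pos hev]
        have hi1 : i + 1 ≤ m := hsucc i hi hev
        rw [hgx (i + 1) hi1, if_neg (by omega)]
        congr 1
      · rw [if_neg hev]
        have h1 : 1 ≤ i := hpred i (by omega)
        rw [hgx (i - 1) (by omega), if_pos (by omega)]
        congr 1
        omega
    · rw [hgnP z hz, hgnP _ (hfP z hz), hf.1 z]
  refine ⟨g, ⟨hinv, ?_⟩, ?_⟩
  · intro z hz
    by_cases hzP : z ∈ P
    · obtain ⟨i, hi, rfl⟩ := (hmemP z).mp hzP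
      rw [hgx i hi] at hz ⊢
      by_cases hev : i % 2 = 0
      · rw [if_pos hev] at hz ⊢
        exact hadj i (by omega)
      · rw [if_neg hev] at hz ⊢
        have h1 : 1 ≤ i := hpred i (by omega)
        have := hadj (i - 1) (by omega)
        rw [show i - 1 + 1 = i by omega] at this
        exact this.symm
    · rw [hgnP z hzP] at hz ⊢
      exact hf.2 z hz
  · ext z
    rw [Finset.mem_union, mem_mSet]
    by_cases hzP : z ∈ P
    · simp only [hzP, true_or, iff_true]
      obtain ⟨i, hi, rfl⟩ := (hmemP z).mp hzP
      rw [hgx i hi]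
      by_cases hev : i % 2 = 0
      · rw [if_pos hev]
        intro h
        have := hinj _ (hsucc i hi hev) i hi h
        omega
      · rw [if_neg hev]
        have h1 : 1 ≤ i := hpred i (by omega)
        intro h
        have := hinj _ (by omega : i - 1 ≤ m) i hi h
        omega
    · rw [hgnP z hzP]
      simp only [hzP, false_or]
      rw [mem_mSet]

end GT

section GT2

variable {W : Type*} [Fintype W] [DecidableEq W]

/-- distinctness of the alternating trajectory -/
lemma traj_inj {f₁ f₂ : W → W} (h₁ : Function.Involutive f₁) (h₂ : Function.Involutive f₂)
    (w : ℕ → W) (hu : f₁ (w 0) = w 0)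
    (hstep : ∀ i, w (i + 1) = if i % 2 = 0 then f₂ (w i) else f₁ (w i))
    (m : ℕ) (halive : ∀ i < m, w (i + 1) ≠ w i) :
    ∀ b ≤ m, ∀ a < b, w a ≠ w b := by
  -- arrival function: `w i = gpar i (w (i-1))` for `i ≥ 1`
  have harr : ∀ i, 1 ≤ i → w i = (if i % 2 = 1 then f₂ else f₁) (w (i - 1)) := by
    intro i hi
    have h2 := hstep (i - 1)
    rw [show i - 1 + 1 = i by omega] at h2
    by_cases h : i % 2 = 1
    · rw [if_pos h, h2, if_pos (by omega)]
    · rw [if_neg h, h2, if_neg (by omega)]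
  have hback : ∀ i, 1 ≤ i → (if i % 2 = 1 then f₂ else f₁) (w i) = w (i - 1) := by
    intro i hi
    rw [harr i hi]
    by_cases h : i % 2 = 1
    · rw [if_pos h]
      exact h₂ _
    · rw [if_neg h]
      exact h₁ _
  intro b
  induction b using Nat.strong_induction_on with
  | _ b ih =>
    intro hbm a hab heq
    by_cases hpar : a % 2 = b % 2
    · rcases Nat.eq_zero_or_pos a with rfl | ha
      · -- a = 0, b even
        have hb2 : b % 2 = 0 := by omega
        have hb1 : 1 ≤ b := by omega
        have hkey : w (b - 1) = w b := by
          rw [← hback b hb1, if_neg (by omega), ← heq, hu]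
        have halv := halive (b - 1) (by omega)
        rw [show b - 1 + 1 = b by omega] at halv
        exact halv hkey.symm
      · have hA : w (a - 1) = w (b - 1) := by
          rw [← hback a (by omega), ← hback b (by omega), heq]
          by_cases h : a % 2 = 1
          · rw [if_pos h, if_pos (by omega)]
          · rw [if_neg h, if_neg (by omega)]
        exact ih (b - 1) (by omega) (by omega) (a - 1) (by omega) hA
    · -- different parity
      have hstepa := hstep a
      have harrb : (if b % 2 = 1 then f₂ else f₁) (w b) = w (b - 1) := hback b (by omega)
      have hAB : w (a + 1) = w (b - 1) := by
        rw [← harrb, ← heq, hstepa]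
        by_cases h : a % 2 = 0
        · rw [if_pos h, if_pos (by omega)]
        · rw [if_neg h, if_neg (by omega)]
      by_cases hab1 : a + 1 = b
      · have := halive (b - 1) (by omega)
        rw [show b - 1 + 1 = b by omega] at this
        apply this
        rw [← hAB, hab1]
      · by_cases hab2 : a + 1 = b - 1
        · exact hpar (by omega)
        · exact ih (b - 1) (by omega) (by omega) (a + 1) (by omega) hAB

/-- the trajectory must stall -/
lemma traj_stall {f₁ f₂ : W → W} (h₁ : Function.Involutive f₁) (h₂ : Function.Involutive f₂)
    (w : ℕ → W) (hu : f₁ (w 0) = w 0)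
    (hstep : ∀ i, w (i + 1) = if i % 2 = 0 then f₂ (w i) else f₁ (w i)) :
    ∃ j, w (j + 1) = w j := by
  by_contra h
  push_neg at h
  have hinj := traj_inj h₁ h₂ w hu hstep (Fintype.card W) (fun i _ => h i)
  have : ((Finset.range (Fintype.card W + 1)).image w).card = Fintype.card W + 1 := by
    rw [Finset.card_image_of_injOn, Finset.card_range]
    intro a ha b hb hab
    rw [Finset.mem_coe, Finset.mem_range] at ha hb
    rcases lt_trichotomy a b with hl | hl | hl
    · exact absurd hab (hinj b (by omega) a hl)
    · exact hl
    · exact absurd hab.symm (hinj a (by omega) b hl)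
  have hle := Finset.card_le_univ ((Finset.range (Fintype.card W + 1)).image w)
  rw [this] at hle
  omega

end GT2

section GT3

variable {W : Type*} [Fintype W] [DecidableEq W]

/-- delete a vertex (all of its edges) -/
def delV (H : SimpleGraph W) (v : W) : SimpleGraph W where
  Adj a b := H.Adj a b ∧ a ≠ v ∧ b ≠ v
  symm := ⟨by rintro a b ⟨h, ha, hb⟩; exact ⟨h.symm, hb, ha⟩⟩
  loopless := ⟨fun a h => H.loopless.irrefl a h.1⟩

/-- a (finite) vertex cover -/
def FCov (H : SimpleGraph W) (D : Finset W) : Prop :=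
  ∀ x y, H.Adj x y → x ∈ D ∨ y ∈ D

lemma isMat_of_delV {H : SimpleGraph W} {v : W} {f : W → W} (hf : IsMat (delV H v) f) :
    IsMat H f := ⟨hf.1, fun x hx => (hf.2 x hx).1⟩

lemma delV_fixes {H : SimpleGraph W} {v : W} {f : W → W} (hf : IsMat (delV H v) f) :
    f v = v := by
  by_contra h
  exact (hf.2 v h).2.1 rfl

lemma mSet_id : mSet (id : W → W) = ∅ := by
  ext z
  rw [mem_mSet]
  simp

lemma nuG_two_of_adj {H : SimpleGraph W} {x y : W} (hxy : H.Adj x y) : 2 ≤ nuG H := by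
  obtain ⟨g, hg, hmg⟩ := matAddEdge (isMat_id H) rfl rfl hxy
  have h2 : (mSet g).card = 2 := by
    rw [hmg, mSet_id]
    rw [Finset.card_insert_of_notMem (by simp [hxy.ne]), Finset.card_insert_of_notMem (by simp)]
    simp
  rw [← h2]
  exact msize_le_nuG hg

lemma nuG_delV_le {H : SimpleGraph W} {v : W}
    (hess : ∀ f, IsMat H f → (mSet f).card = nuG H → f v ≠ v) :
    nuG (delV H v) + 2 ≤ nuG H := by
  classical
  obtain ⟨fm, hfm, hcm⟩ := exists_max_mat H
  have hvm : fm v ≠ v := hess fm hfm hcm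
  have h2 : 2 ≤ nuG H := by
    rw [← hcm]
    have hsub : ({v, fm v} : Finset W) ⊆ mSet fm := by
      intro z hz
      rcases Finset.mem_insert.mp hz with rfl | hz
      · exact mem_mSet.mpr hvm
      · rw [Finset.mem_singleton] at hz
        subst hz
        rw [mem_mSet, hfm.1 v]
        exact fun h => hvm h.symm
    calc 2 = ({v, fm v} : Finset W).card := (Finset.card_pair (Ne.symm hvm)).symm
    _ ≤ _ := Finset.card_le_card hsub
  have hsup : nuG (delV H v) ≤ nuG H - 2 := by
    have hb : ∀ g ∈ (Finset.univ.filter (fun f : W → W => IsMat (delV H v) f)),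
        (mSet g).card ≤ nuG H - 2 := by
      intro g hgmem
      rw [Finset.mem_filter] at hgmem
      have hg : IsMat (delV H v) g := hgmem.2
      have hgH : IsMat H g := isMat_of_delV hg
      have hne : (mSet g).card ≠ nuG H := by
        intro h
        exact hess g hgH h (delV_fixes hg)
      have hle := msize_le_nuG hgH
      obtain ⟨p, hp⟩ := even_mSet_card hgH.1
      obtain ⟨q, hq⟩ := even_nuG H
      omega
    exact Finset.sup_le hb
  omega

/-- the contradiction extracted from an improving flip -/
lemma flip_contra {H : SimpleGraph W} {f g : W → W} (hg : IsMat H g)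
    (hmax : (mSet f).card = nuG H) (P : Finset W) (hmg : mSet g = P ∪ mSet f)
    {a b : W} (ha : a ∈ P) (hb : b ∈ P) (hab : a ≠ b) (hfa : f a = a) (hfb : f b = b) :
    False := by
  classical
  have h2 : 2 ≤ (P \ mSet f).card := by
    have hsub : ({a, b} : Finset W) ⊆ P \ mSet f := by
      intro z hz
      rcases Finset.mem_insert.mp hz with rfl | hz
      · exact Finset.mem_sdiff.mpr ⟨ha, by rw [mem_mSet]; simp [hfa]⟩
      · rw [Finset.mem_singleton] at hz
        subst hz
        exact Finset.mem_sdiff.mpr ⟨hb, by rw [mem_mSet]; simp [hfb]⟩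
    calc 2 = ({a, b} : Finset W).card := (Finset.card_pair hab).symm
    _ ≤ _ := Finset.card_le_card hsub
  have hcard : (P \ mSet f).card + (mSet f).card = (P ∪ mSet f).card :=
    Finset.card_sdiff_add_card P (mSet f)
  have hle := msize_le_nuG hg
  rw [hmg, ← hcard] at hle
  omega

theorem GT_main : ∀ (N : ℕ) (H : SimpleGraph W), nuG H ≤ N →
    (∀ ℓ, Odd ℓ → ℓ ≤ nuG H + 1 → ∀ w : ℕ → W, ¬ ClosedWalk H ℓ w) →
    ∃ D : Finset W, FCov H D ∧ 2 * D.card ≤ nuG H := by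
  intro N
  induction N with
  | zero =>
      intro H hnu _
      refine ⟨∅, fun x y hxy => ?_, by simp⟩
      have := nuG_two_of_adj hxy
      omega
  | succ N ih =>
      intro H hnu hwalk
      by_cases hedge : ∃ x y, H.Adj x y
      · by_cases hess : ∃ v, ∀ f, IsMat H f → (mSet f).card = nuG H → f v ≠ v
        · -- an essential vertex: delete it and recurse
          obtain ⟨v, hv⟩ := hess
          have hle2 := nuG_delV_le hv
          have hwalk' : ∀ ℓ, Odd ℓ → ℓ ≤ nuG (delV H v) + 1 → ∀ w : ℕ → W,
              ¬ ClosedWalk (delV H v) ℓ w := by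
            intro ℓ hodd hℓ w hw
            exact hwalk ℓ hodd (by omega) w ⟨fun i hi => (hw.1 i hi).1, hw.2⟩
          obtain ⟨D', hD', hcard'⟩ := ih (delV H v) (by omega) hwalk'
          refine ⟨insert v D', ?_, ?_⟩
          · intro x y hxy
            by_cases hx : x = v
            · left; rw [hx]; exact Finset.mem_insert_self v D'
            · by_cases hy : y = v
              · right; rw [hy]; exact Finset.mem_insert_self v D'
              · rcases hD' x y ⟨hxy, hx, hy⟩ with h | h
                · left; exact Finset.mem_insert_of_mem h
                · right; exact Finset.mem_insert_of_mem h
          · have := Finset.card_insert_le v D'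
            omega
        · -- no essential vertex: derive a contradiction
          exfalso
          push_neg at hess
          obtain ⟨u, v0, huv⟩ := hedge
          obtain ⟨f₁, hf₁, hc₁, hfu⟩ := hess u
          obtain ⟨f₂, hf₂, hc₂, hfv⟩ := hess v0
          have hf2u : f₂ u ≠ u := by
            intro h
            obtain ⟨g, hg, hmg⟩ := matAddEdge hf₂ h hfv huv
            have hunm : u ∉ mSet f₂ := by rw [mem_mSet]; simp [h]
            have hvnm : v0 ∉ mSet f₂ := by rw [mem_mSet]; simp [hfv]
            have hcg : (mSet g).card = nuG H + 2 := by
              rw [hmg, Finset.card_insert_of_notMem (by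
                  rw [Finset.mem_insert]
                  push_neg
                  exact ⟨huv.ne, hunm⟩),
                Finset.card_insert_of_notMem hvnm, hc₂]
            have := msize_le_nuG hg
            omega
          -- the alternating trajectory from u
          set w : ℕ → W :=
            fun n => Nat.rec u (fun i prev => if i % 2 = 0 then f₂ prev else f₁ prev) n with hwdef
          have hw0 : w 0 = u := rfl
          have hstep : ∀ i, w (i + 1) = if i % 2 = 0 then f₂ (w i) else f₁ (w i) := fun i => rfl
          have hfu' : f₁ (w 0) = w 0 := by rw [hw0]; exact hfu
          have hstall := traj_stall hf₁.1 hf₂.1 w hfu' hstep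
          set T := Nat.find hstall with hTdef
          have hstallT : w (T + 1) = w T := Nat.find_spec hstall
          have halive : ∀ i < T, w (i + 1) ≠ w i := fun i hi => Nat.find_min hstall hi
          have hinj := traj_inj hf₁.1 hf₂.1 w hfu' hstep T halive
          have hinj' : ∀ i ≤ T, ∀ j ≤ T, w i = w j → i = j := by
            intro i hi j hj heq
            rcases lt_trichotomy i j with h | h | h
            · exact absurd heq (hinj j hj i h)
            · exact h
            · exact absurd heq.symm (hinj i hi j h)
          have hT1 : 1 ≤ T := by
            rcases Nat.eq_zero_or_pos T with h | h
            · exfalso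
              have hs := hstallT
              rw [h, hstep 0, if_pos rfl, hw0] at hs
              exact hf2u hs
            · exact h
          have htadj : ∀ i < T, H.Adj (w i) (w (i + 1)) := by
            intro i hi
            have hne := halive i hi
            rw [hstep i] at hne ⊢
            by_cases h : i % 2 = 0
            · rw [if_pos h] at hne ⊢
              exact hf₂.2 (w i) hne
            · rw [if_neg h] at hne ⊢
              exact hf₁.2 (w i) hne
          by_cases hTpar : T % 2 = 1
          · -- T odd: flip f₁ along the path, contradiction with maximality
            have hstallf₁ : f₁ (w T) = w T := by
              have hs := hstallT
              rw [hstep T, if_neg (by omega)] at hs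
              exact hs
            have hclose : ∀ i ≤ T, f₁ (w i) = w i ∨ ∃ j ≤ T, f₁ (w i) = w j := by
              intro i hi
              rcases Nat.eq_zero_or_pos i with rfl | hipos
              · exact Or.inl hfu'
              · by_cases hio : i % 2 = 1
                · by_cases hiT : i = T
                  · subst hiT
                    exact Or.inl hstallf₁
                  · refine Or.inr ⟨i + 1, by omega, ?_⟩
                    rw [hstep i, if_neg (by omega)]
                · refine Or.inr ⟨i - 1, by omega, ?_⟩
                  have harr := hstep (i - 1)
                  rw [show i - 1 + 1 = i by omega, if_neg (by omega)] at harr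
                  rw [harr, hf₁.1]
            obtain ⟨g, hg, hmg⟩ := pairUp w T hTpar hinj' hf₁ htadj hclose
            apply flip_contra hg hc₁ _ hmg
              (a := w 0) (b := w T)
              (Finset.mem_image.mpr ⟨0, Finset.mem_range.mpr (by omega), rfl⟩)
              (Finset.mem_image.mpr ⟨T, Finset.mem_range.mpr (by omega), rfl⟩)
              (fun h => by have := hinj' 0 (by omega) T (by omega) h; omega)
              hfu' hstallf₁
          · -- T even
            have hTpar' : T % 2 = 0 := by omega
            have hT2 : 2 ≤ T := by omega
            have hstallf₂ : f₂ (w T) = w T := by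
              have hs := hstallT
              rw [hstep T, if_pos hTpar'] at hs
              exact hs
            by_cases hvP : ∃ j ≤ T, w j = v0
            · -- v0 lies on the path: a short odd closed walk, contradiction
              obtain ⟨j, hj, hwj⟩ := hvP
              have hjT : j = T := by
                by_contra hne
                have hjlt : j < T := by omega
                by_cases hjo : j % 2 = 0
                · apply halive j hjlt
                  rw [hstep j, if_pos hjo, hwj, hfv]
                · have harr := hstep (j - 1)
                  rw [show j - 1 + 1 = j by omega, if_pos (by omega)] at harr
                  have hkey : w (j - 1) = w j := by
                    rw [← hf₂.1 (w (j - 1)), ← harr, hwj, hfv]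
                  have halv := halive (j - 1) (by omega)
                  rw [show j - 1 + 1 = j by omega] at halv
                  exact halv hkey.symm
              have hwT : w T = v0 := by rw [← hjT]; exact hwj
              -- the bound T ≤ nuG H
              have hTle : T ≤ nuG H := by
                have hsub : ((Finset.range T).image (fun t => w (t + 1))) ⊆ mSet f₁ := by
                  intro z hz
                  rw [Finset.mem_image] at hz
                  obtain ⟨t, ht, rfl⟩ := hz
                  rw [Finset.mem_range] at ht
                  rw [mem_mSet]
                  by_cases hto : t % 2 = 0
                  · have hne : t + 1 < T := by omega
                    have halv := halive (t + 1) hne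
                    rw [hstep (t + 1), if_neg (by omega)] at halv
                    exact halv
                  · have harr := hstep t
                    rw [if_neg (by omega)] at harr
                    intro hcon
                    have hkey : w t = w (t + 1) := by
                      rw [← hf₁.1 (w t), ← harr, hcon]
                    exact halive t (by omega) hkey.symm
                have hcardT : ((Finset.range T).image (fun t => w (t + 1))).card = T := by
                  rw [Finset.card_image_of_injOn, Finset.card_range]
                  intro a ha b hb hab
                  rw [Finset.mem_coe, Finset.mem_range] at ha hb
                  have := hinj' (a + 1) (by omega) (b + 1) (by omega) hab
                  omega
                calc T = ((Finset.range T).image (fun t => w (t + 1))).card := hcardT.symm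
                _ ≤ (mSet f₁).card := Finset.card_le_card hsub
                _ = nuG H := hc₁
              apply hwalk (T + 1) ⟨T / 2, by omega⟩ (by omega)
                (fun i => if i = T + 1 then u else w i)
              constructor
              · intro i hi
                beta_reduce
                by_cases hiT : i = T
                · subst hiT
                  rw [if_neg (by omega), if_pos rfl, hwT]
                  exact huv.symm
                · rw [if_neg (by omega), if_neg (by omega)]
                  exact htadj i (by omega)
              · beta_reduce
                rw [if_pos rfl, if_neg (by omega), hw0]
            · -- v0 off the path: flip f₂ along the extended path, contradiction
              push_neg at hvP
              set x : ℕ → W := fun i => if i = 0 then v0 else w (i - 1) with hx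
              have hx0 : x 0 = v0 := rfl
              have hxs : ∀ i, 1 ≤ i → x i = w (i - 1) := by
                intro i hi
                rw [hx]
                beta_reduce
                rw [if_neg (by omega)]
              have hinj_x : ∀ i ≤ T + 1, ∀ j ≤ T + 1, x i = x j → i = j := by
                intro i hi j hj heq
                rcases Nat.eq_zero_or_pos i with rfl | hipos
                · rcases Nat.eq_zero_or_pos j with rfl | hjpos
                  · rfl
                  · rw [hx0, hxs j hjpos] at heq
                    exact absurd heq.symm (hvP (j - 1) (by omega))
                · rcases Nat.eq_zero_or_pos j with rfl | hjpos
                  · rw [hx0, hxs i hipos] at heq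
                    exact absurd heq (hvP (i - 1) (by omega))
                  · rw [hxs i hipos, hxs j hjpos] at heq
                    have := hinj' (i - 1) (by omega) (j - 1) (by omega) heq
                    omega
              have hadj_x : ∀ i < T + 1, H.Adj (x i) (x (i + 1)) := by
                intro i hi
                rcases Nat.eq_zero_or_pos i with rfl | hipos
                · rw [hx0, hxs 1 (by omega), hw0]
                  exact huv.symm
                · rw [hxs i hipos, hxs (i + 1) (by omega), show i + 1 - 1 = i by omega]
                  have := htadj (i - 1) (by omega)
                  rw [show i - 1 + 1 = i by omega] at this
                  exact this
              have hclose_x : ∀ i ≤ T + 1, f₂ (x i) = x i ∨ ∃ j ≤ T + 1, f₂ (x i) = x j := by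
                intro i hi
                rcases Nat.eq_zero_or_pos i with rfl | hipos
                · rw [hx0]
                  exact Or.inl hfv
                · rw [hxs i hipos]
                  by_cases hiT : i = T + 1
                  · left
                    rw [hiT, show T + 1 - 1 = T by omega]
                    exact hstallf₂
                  · by_cases hto : (i - 1) % 2 = 0
                    · refine Or.inr ⟨i + 1, by omega, ?_⟩
                      rw [hxs (i + 1) (by omega), show i + 1 - 1 = i by omega]
                      have hs := hstep (i - 1)
                      rw [if_pos hto, show i - 1 + 1 = i by omega] at hs
                      exact hs.symm
                    · refine Or.inr ⟨i - 1, by omega, ?_⟩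
                      have harr := hstep (i - 1 - 1)
                      rw [show i - 1 - 1 + 1 = i - 1 by omega, if_pos (by omega)] at harr
                      rw [harr, hf₂.1]
                      rcases Nat.eq_zero_or_pos (i - 1) with h0 | hpos
                      · omega
                      · rw [hxs (i - 1) hpos]
              obtain ⟨g, hg, hmg⟩ := pairUp x (T + 1) (by omega) hinj_x hf₂ hadj_x hclose_x
              apply flip_contra hg hc₂ _ hmg
                (a := x 0) (b := x (T + 1))
                (Finset.mem_image.mpr ⟨0, Finset.mem_range.mpr (by omega), rfl⟩)
                (Finset.mem_image.mpr ⟨T + 1, Finset.mem_range.mpr (by omega), rfl⟩)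
                (fun h => by have := hinj_x 0 (by omega) (T + 1) (by omega) h; omega)
                (by rw [hx0]; exact hfv)
                (by rw [hxs (T + 1) (by omega), show T + 1 - 1 = T by omega]; exact hstallf₂)
      · -- no edges at all
        push_neg at hedge
        exact ⟨∅, fun x y hxy => absurd hxy (hedge x y), by simp⟩

end GT3

section CL

variable {V : Type*}

/-- the parallelization of the vertex set along a capacity vector -/
abbrev Par (b : V →₀ ℕ) : Type _ := Σ v : b.support, Fin (b v.1)

/-- the parallelized graph -/
def ParG (G : SimpleGraph V) (b : V →₀ ℕ) : SimpleGraph (Par b) where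
  Adj a c := G.Adj a.1.1 c.1.1
  symm := ⟨fun _ _ h => h.symm⟩
  loopless := ⟨fun _ h => G.loopless.irrefl _ h⟩

open Classical in
lemma par_fiber_card (b : V →₀ ℕ) {v : V} (hv : v ∈ b.support) :
    (Finset.univ.filter (fun x : Par b => (x.1 : V) = v)).card = b v := by
  classical
  have hset : Finset.univ.filter (fun x : Par b => (x.1 : V) = v)
      = (({⟨v, hv⟩} : Finset b.support).sigma (fun v' => (Finset.univ : Finset (Fin (b v'.1))))) := by
    ext x
    rw [Finset.mem_filter, Finset.mem_sigma, Finset.mem_singleton]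
    constructor
    · rintro ⟨-, h⟩
      exact ⟨Subtype.ext h, Finset.mem_univ _⟩
    · rintro ⟨h, -⟩
      exact ⟨Finset.mem_univ _, by rw [h]⟩
  rw [hset, Finset.card_sigma, Finset.sum_singleton, Finset.card_univ, Fintype.card_fin]

open Classical in
lemma par_weight_card (b : V →₀ ℕ) (C : Set V) :
    (Finset.univ.filter (fun x : Par b => (x.1 : V) ∈ C)).card = wtC C b := by
  classical
  have hset : Finset.univ.filter (fun x : Par b => (x.1 : V) ∈ C)
      = ((Finset.univ.filter (fun v' : b.support => (v' : V) ∈ C)).sigma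
          (fun v' => (Finset.univ : Finset (Fin (b v'.1))))) := by
    ext x
    rw [Finset.mem_filter, Finset.mem_sigma, Finset.mem_filter]
    constructor
    · rintro ⟨-, h⟩
      exact ⟨⟨Finset.mem_univ _, h⟩, Finset.mem_univ _⟩
    · rintro ⟨⟨-, h⟩, -⟩
      exact ⟨Finset.mem_univ _, h⟩
  rw [hset, Finset.card_sigma]
  have : ∀ v' : b.support, (Finset.univ : Finset (Fin (b v'.1))).card = b v'.1 := by
    intro v'
    rw [Finset.card_univ, Fintype.card_fin]
  rw [Finset.sum_congr rfl (fun v' _ => this v')]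
  rw [Finset.sum_filter, wtC_eq_sum, ← Finset.sum_coe_sort b.support
    (fun v => if v ∈ C then b v else 0)]

open Classical in
/-- value of the consumed exponent vector, as a count of used parallel copies -/
lemma esum_proj_apply (b : V →₀ ℕ) (L : List (Par b × Par b)) (v : V) :
    (esum (L.map fun p => ((p.1.1 : V), (p.2.1 : V)))) v
      = ((L.flatMap fun p => [p.1, p.2]).filter (fun x : Par b => (x.1 : V) = v)).length := by
  classical
  induction L with
  | nil => simp [esum_nil]
  | cons q L ih =>
      rw [List.map_cons, esum_cons, List.flatMap_cons]
      simp only [Finsupp.add_apply, Finsupp.single_apply, List.filter_append, List.length_append]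
      rw [ih]
      simp only [List.filter, List.length]
      by_cases h1 : (q.1.1 : V) = v <;> by_cases h2 : (q.2.1 : V) = v <;>
        simp [h1, h2] <;> omega

open Classical in
/-- extracting disjoint pairs from a matching -/
lemma extract_pairs {b : V →₀ ℕ} {G : SimpleGraph V} :
    ∀ (t : ℕ) (f : Par b → Par b), IsMat (ParG G b) f → 2 * t ≤ (mSet f).card →
    ∃ L : List (Par b × Par b), L.length = t ∧ (∀ p ∈ L, (ParG G b).Adj p.1 p.2) ∧
      (L.flatMap fun p => [p.1, p.2]).Nodup ∧
      (∀ x ∈ (L.flatMap fun p => [p.1, p.2]), x ∈ mSet f) := by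
  classical
  intro t
  induction t with
  | zero => intro f _ _; exact ⟨[], rfl, by simp, by simp, by simp⟩
  | succ t iht =>
      intro f hf hcard
      have hne : (mSet f).Nonempty := Finset.card_pos.mp (by omega)
      obtain ⟨a, ha⟩ := hne
      have hfa : f a ≠ a := mem_mSet.mp ha
      have hfam : f a ∈ mSet f := by
        rw [mem_mSet, hf.1 a]
        exact fun h => hfa h.symm
      set f' : Par b → Par b := fun z => if z = a ∨ z = f a then z else f z with hf'def
      have hf'out : ∀ z, ¬ (z = a ∨ z = f a) → f' z = f z := by
        intro z hz
        rw [hf'def]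
        simp only [if_neg hz]
      have hf'in : ∀ z, (z = a ∨ z = f a) → f' z = z := by
        intro z hz
        rw [hf'def]
        simp only [if_pos hz]
      have hfznot : ∀ z, ¬ (z = a ∨ z = f a) → ¬ (f z = a ∨ f z = f a) := by
        intro z hz h
        rcases h with h | h
        · exact hz (Or.inr (by rw [← h, hf.1 z]))
        · exact hz (Or.inl (by rw [← hf.1 z, h, hf.1 a]))
      have hf' : IsMat (ParG G b) f' := by
        constructor
        · intro z
          by_cases hz : z = a ∨ z = f a
          · rw [hf'in z hz, hf'in z hz]
          · rw [hf'out z hz, hf'out _ (hfznot z hz), hf.1 z]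
        · intro z hz
          by_cases hzc : z = a ∨ z = f a
          · rw [hf'in z hzc] at hz
            exact absurd rfl hz
          · rw [hf'out z hzc] at hz ⊢
            exact hf.2 z hz
      have hmset' : mSet f' = ((mSet f).erase a).erase (f a) := by
        ext z
        rw [mem_mSet, Finset.mem_erase, Finset.mem_erase, mem_mSet]
        by_cases hz : z = a ∨ z = f a
        · rw [hf'in z hz]
          constructor
          · intro h
            exact absurd rfl h
          · rintro ⟨h1, h2, h3⟩
            rcases hz with rfl | rfl
            · exact absurd rfl h2
            · exact absurd rfl h1
        · rw [hf'out z hz]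
          push_neg at hz
          simp [hz.1, hz.2]
      have hcard' : 2 * t ≤ (mSet f').card := by
        rw [hmset', Finset.card_erase_of_mem (Finset.mem_erase.mpr ⟨hfa, hfam⟩),
          Finset.card_erase_of_mem ha]
        omega
      obtain ⟨L, hlen, hadjL, hnodup, hmem⟩ := iht f' hf' hcard'
      have hmemnot : ∀ x ∈ (L.flatMap fun p => [p.1, p.2]), x ≠ a ∧ x ≠ f a := by
        intro x hx
        have := hmem x hx
        rw [hmset', Finset.mem_erase, Finset.mem_erase] at this
        exact ⟨this.2.1, this.1⟩
      refine ⟨(a, f a) :: L, by simp [hlen], ?_, ?_, ?_⟩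
      · intro p hp
        rcases List.mem_cons.mp hp with rfl | hp
        · exact hf.2 a hfa
        · exact hadjL p hp
      · rw [List.flatMap_cons]
        simp only [List.nodup_cons, List.cons_append, List.nil_append]
        refine ⟨?_, ?_, hnodup⟩
        · intro h
          rcases List.mem_cons.mp h with h | h
          · exact hfa h.symm
          · exact (hmemnot a h).1 rfl
        · intro h
          exact (hmemnot (f a) h).2 rfl
      · intro x hx
        rw [List.flatMap_cons] at hx
        rcases List.mem_append.mp hx with h | h
        · rcases List.mem_cons.mp h with rfl | h
          · exact ha
          · rw [List.mem_singleton] at h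
            subst h
            exact hfam
        · have := hmem x h
          rw [hmset', Finset.mem_erase, Finset.mem_erase] at this
          exact this.2.2

end CL

section CL2

variable {V : Type*}

open Classical in
lemma exists_edge_list (G : SimpleGraph V) (b : V →₀ ℕ) (s n : ℕ) (hs : s ≤ n)
    (hmin : ∀ (m : ℕ) (c : ZMod (2 * m + 1) → V), IsInducedCycleMap G (2 * m + 1) c → n ≤ m)
    (hwt : ∀ C : Set V, IsMinCoverA G C → s ≤ wtC C b) :
    ∃ L : List (V × V), L.length = s ∧ (∀ p ∈ L, G.Adj p.1 p.2) ∧ esum L ≤ b := by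
  classical
  rcases Nat.eq_zero_or_pos s with rfl | hspos
  · exact ⟨[], rfl, by simp, by rw [esum_nil]; exact zero_le ..⟩
  have hcov : ∀ D : Finset (Par b), FCov (ParG G b) D → s ≤ D.card := by
    intro D hD
    obtain ⟨C, hC⟩ : ∃ C : Set V, C = {v | ∀ x : Par b, (x.1 : V) = v → x ∈ D} := ⟨_, rfl⟩
    have hCcov : IsCoverA G C := by
      intro p q hpq
      by_contra hcon
      push_neg at hcon
      obtain ⟨hp, hq⟩ := hcon
      rw [hC, Set.mem_setOf_eq] at hp hq
      push_neg at hp hq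
      obtain ⟨xp, hxp, hxpD⟩ := hp
      obtain ⟨xq, hxq, hxqD⟩ := hq
      have hadj : (ParG G b).Adj xp xq := by
        show G.Adj (xp.1 : V) (xq.1 : V)
        rw [hxp, hxq]
        exact hpq
      rcases hD xp xq hadj with h | h
      · exact hxpD h
      · exact hxqD h
    obtain ⟨C', hC'sub, hC'min⟩ := exists_minCover_subset G C hCcov
    have h1 : s ≤ wtC C' b := hwt C' hC'min
    have h2 : wtC C' b ≤ wtC C b := wtC_mono hC'sub b
    have h3 : wtC C b ≤ D.card := by
      rw [← par_weight_card b C]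
      apply Finset.card_le_card
      intro x hx
      rw [Finset.mem_filter] at hx
      have hx2 := hx.2
      rw [hC] at hx2
      exact hx2 x rfl
    omega
  have hnu2 : 2 * s ≤ nuG (ParG G b) := by
    by_contra hcon
    push_neg at hcon
    have hwalkH : ∀ ℓ, Odd ℓ → ℓ ≤ nuG (ParG G b) + 1 →
        ∀ w : ℕ → Par b, ¬ ClosedWalk (ParG G b) ℓ w := by
      intro ℓ hodd hℓ w hw
      have hGwalk : ClosedWalk G ℓ (fun i => ((w i).1 : V)) := by
        constructor
        · intro i hi
          exact hw.1 i hi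
        · show ((w ℓ).1 : V) = ((w 0).1 : V)
          rw [hw.2]
      obtain ⟨m', hm'⟩ := hodd
      exact no_short_odd_walk n hmin ℓ ⟨m', hm'⟩ (by omega) _ hGwalk
    obtain ⟨D, hD, hDcard⟩ := GT_main (nuG (ParG G b)) (ParG G b) le_rfl hwalkH
    have := hcov D hD
    omega
  obtain ⟨f, hf, hfc⟩ := exists_max_mat (ParG G b)
  obtain ⟨L, hlen, hadjL, hnodup, hmem⟩ := extract_pairs s f hf (by omega)
  refine ⟨L.map (fun p => ((p.1.1 : V), (p.2.1 : V))), by rw [List.length_map, hlen], ?_, ?_⟩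
  · intro p hp
    rw [List.mem_map] at hp
    obtain ⟨q, hq, rfl⟩ := hp
    exact hadjL q hq
  · rw [Finsupp.le_def]
    intro v
    rw [esum_proj_apply]
    by_cases hv : v ∈ b.support
    · have hnodupf : ((L.flatMap fun p => [p.1, p.2]).filter
          (fun x : Par b => decide ((x.1 : V) = v))).Nodup := hnodup.filter _
      rw [← List.toFinset_card_of_nodup hnodupf, ← par_fiber_card b hv]
      apply Finset.card_le_card
      intro x hx
      rw [List.mem_toFinset, List.mem_filter] at hx
      rw [Finset.mem_filter]
      exact ⟨Finset.mem_univ _, by simpa using hx.2⟩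
    · have hempty : ((L.flatMap fun p => [p.1, p.2]).filter
          (fun x : Par b => decide ((x.1 : V) = v))).length = 0 := by
        rw [List.length_eq_zero_iff, List.filter_eq_nil_iff]
        intro x _ h
        have hxv : (x.1 : V) = v := by simpa using h
        exact hv (hxv ▸ x.1.2)
      rw [hempty]
      exact Nat.zero_le _

end CL2

/-- If `G` is non-bipartite and its smallest induced odd cycle has length `2n+1`,
then `I(G)^{(s)} = I(G)ˢ` for all `s ≤ n`. -/
theorem stmt6 (k : Type*) [Field k] {V : Type*} (G : SimpleGraph V)
    (hnb : ¬ G.Colorable 2) (n : ℕ)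
    (hex : ∃ c : ZMod (2 * n + 1) → V, IsInducedCycleMap G (2 * n + 1) c)
    (hmin : ∀ (m : ℕ) (c : ZMod (2 * m + 1) → V), IsInducedCycleMap G (2 * m + 1) c → n ≤ m)
    (s : ℕ) (hs : s ≤ n) :
    Ideal.symbPow (edgeIdeal k G) s = edgeIdeal k G ^ s := by
  classical
  apply le_antisymm
  · -- the symbolic power is contained in the ordinary power
    intro f hf
    rw [Ideal.symbPow] at hf
    have hfC : ∀ C : Set V, IsMinCoverA G C → f ∈ coverPrime k C ^ s := by
      intro C hC
      have hmem := coverPrime_mem_minimalPrimes (k := k) hC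
      exact Ideal.mem_iInf.mp (Ideal.mem_iInf.mp hf (coverPrime k C)) hmem
    have hsum : f = ∑ c ∈ f.support, MvPolynomial.monomial c (MvPolynomial.coeff c f) :=
      MvPolynomial.as_sum f
    rw [hsum]
    apply Ideal.sum_mem
    intro c hc
    obtain ⟨L, hlen, hadjL, hesum⟩ := exists_edge_list G c s n hs hmin
      (fun C hC => wt_ge_of_mem_pow (hfC C hC) hc)
    exact mono_mem_edgeIdeal_pow _ L hlen hadjL hesum
  · -- the ordinary power is contained in the symbolic power
    rw [Ideal.symbPow]
    apply le_iInf
    intro p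
    apply le_iInf
    intro hp
    exact pow_le_pow_left' hp.1.2 s
end
end

section
/- Let G be an odd bicyclic graph whose two odd cycles form the unique bow B of size m+n+1. For s > m+n+1 and u_j a minimal monomial generator of I(G)^{s-m-n-1}, if m_B·u_j ∉ I(G)^s then the colon ideal I(G)^s : (m_B u_j) is minimally generated by monomials of degree at most two. -/
open MvPolynomial

noncomputable section

namespace Stmt14Aux

open Finsupp

variable {V : Type*} {k : Type*} [Field k]

def pairF (p : V × V) : V →₀ ℕ := Finsupp.single p.1 1 + Finsupp.single p.2 1

def eExp (L : Multiset (V × V)) : V →₀ ℕ := (L.map pairF).sum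

@[simp] lemma eExp_zero : eExp (0 : Multiset (V × V)) = 0 := rfl

@[simp] lemma eExp_cons (p : V × V) (L : Multiset (V × V)) :
    eExp (p ::ₘ L) = pairF p + eExp L := by simp [eExp]

@[simp] lemma eExp_add (L M : Multiset (V × V)) : eExp (L + M) = eExp L + eExp M := by
  simp [eExp]

lemma pairF_le_eExp {p : V × V} {L : Multiset (V × V)} (h : p ∈ L) : pairF p ≤ eExp L := by
  obtain ⟨L', rfl⟩ := Multiset.exists_cons_of_mem h
  simp

def degF (d : V →₀ ℕ) : ℕ := d.sum fun _ n => n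

lemma degF_add (a b : V →₀ ℕ) : degF (a + b) = degF a + degF b :=
  Finsupp.sum_add_index' (fun _ => rfl) (fun _ _ _ => rfl)

@[simp] lemma degF_single (x : V) (n : ℕ) : degF (Finsupp.single x n) = n := by
  simp [degF, Finsupp.sum_single_index]

lemma degF_mono {a b : V →₀ ℕ} (h : a ≤ b) : degF a ≤ degF b := by
  obtain ⟨c, rfl⟩ := exists_add_of_le h
  simp [degF_add]

lemma degF_eq_zero {a : V →₀ ℕ} (h : degF a = 0) : a = 0 := by
  ext x
  by_contra hx
  have hmem : x ∈ a.support := Finsupp.mem_support_iff.mpr (by simpa using hx)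
  have h2 : a x ≤ degF a := Finset.single_le_sum (f := fun y => a y) (fun _ _ => Nat.zero_le _) hmem
  rw [h] at h2
  simp at hx
  omega

lemma eq_of_le_of_degF_eq {a b : V →₀ ℕ} (h : a ≤ b) (hd : degF a = degF b) : a = b := by
  obtain ⟨c, rfl⟩ := exists_add_of_le h
  have : degF c = 0 := by have := degF_add a c; omega
  simp [degF_eq_zero this]

def otherV [DecidableEq V] (p : V × V) (x : V) : V := if x = p.1 then p.2 else p.1

lemma pairF_eq_of_mem [DecidableEq V] {p : V × V} {x : V} (h : x = p.1 ∨ x = p.2) :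
    pairF p = Finsupp.single x 1 + Finsupp.single (otherV p x) 1 := by
  unfold otherV
  rcases h with h | h
  · simp [pairF, h]
  · by_cases h1 : x = p.1
    · simp [pairF, h1, ← h]
    · simp only [if_neg h1, pairF, ← h]
      exact add_comm _ _

lemma exists_mem_of_eExp_pos {L : Multiset (V × V)} {x : V} (h : eExp L x ≠ 0) :
    ∃ p ∈ L, x = p.1 ∨ x = p.2 := by
  induction L using Multiset.induction with
  | empty => simp at h
  | cons p L ih =>
    rw [eExp_cons] at h
    by_cases hp : x = p.1 ∨ x = p.2
    · exact ⟨p, Multiset.mem_cons_self _ _, hp⟩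
    · push_neg at hp
      have : pairF p x = 0 := by
        simp [pairF, Finsupp.single_apply, Ne.symm hp.1, Ne.symm hp.2]
      rw [Finsupp.add_apply, this, zero_add] at h
      obtain ⟨q, hq, hxq⟩ := ih h
      exact ⟨q, Multiset.mem_cons_of_mem hq, hxq⟩

lemma pairF_apply_of_not_mem {p : V × V} {x : V} (h1 : x ≠ p.1) (h2 : x ≠ p.2) :
    pairF p x = 0 := by
  simp [pairF, Finsupp.single_apply, Ne.symm h1, Ne.symm h2]

lemma degF_pairF (p : V × V) : degF (pairF p) ≤ 2 := by
  classical
  unfold pairF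
  rw [degF_add]
  simp

/-- The core combinatorial lemma (Banerjee-type degree reduction). -/
lemma core [DecidableEq V] (Adj : V → V → Prop) (hne : ∀ {u v}, Adj u v → u ≠ v)
    (E : Multiset (V × V)) :
    ∀ (Gs : Multiset ((V × V) × Multiset (V × V))) (F : V →₀ ℕ),
    (∀ p ∈ E, Adj p.1 p.2) →
    (∀ gc ∈ Gs, (∀ p ∈ gc.2, Adj p.1 p.2) ∧
      ∃ Hx : Multiset (V × V), (∀ p ∈ Hx, Adj p.1 p.2) ∧ Hx.card = gc.2.card + 1 ∧
        eExp Hx ≤ pairF gc.1 + eExp gc.2) →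
    Multiset.card E < Multiset.card Gs →
    eExp (Gs.map Prod.fst) ≤ F + eExp E →
    ∃ F' ≤ F, degF F' ≤ 2 ∧
      ∃ H : Multiset (V × V), (∀ p ∈ H, Adj p.1 p.2) ∧
        Multiset.card H = Multiset.card E + 1 + Multiset.card (Gs.bind Prod.snd) ∧
        eExp H ≤ F' + eExp E + eExp (Gs.bind Prod.snd) := by
  induction E using Multiset.strongInductionOn with
  | _ E IH =>
  intro Gs F hE hGs hcard hdvd
  by_cases h1 : ∃ gc ∈ Gs, pairF gc.1 ≤ F
  · -- BASE case
    obtain ⟨gc, hgcmem, hle⟩ := h1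
    obtain ⟨rest, hrest⟩ : ∃ rest, Gs = gc ::ₘ rest :=
      ⟨Gs.erase gc, (Multiset.cons_erase hgcmem).symm⟩
    obtain ⟨hadjC, Hx, hHadj, hHcard, hHle⟩ := hGs gc hgcmem
    refine ⟨pairF gc.1, hle, degF_pairF _, Hx + E + rest.bind Prod.snd, ?_, ?_, ?_⟩
    · intro p hp
      rcases Multiset.mem_add.mp hp with hp | hp
      · rcases Multiset.mem_add.mp hp with hp | hp
        · exact hHadj p hp
        · exact hE p hp
      · obtain ⟨gc', hgc', hp⟩ := Multiset.mem_bind.mp hp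
        exact (hGs gc' (hrest ▸ Multiset.mem_cons_of_mem hgc')).1 p hp
    · rw [hrest, Multiset.cons_bind]
      simp only [Multiset.card_add, hHcard]
      ring
    · rw [hrest, Multiset.cons_bind]
      simp only [eExp_add]
      calc eExp Hx + eExp E + eExp (rest.bind Prod.snd)
          ≤ (pairF gc.1 + eExp gc.2) + eExp E + eExp (rest.bind Prod.snd) := by
            exact add_le_add_left (add_le_add_left hHle _) _
        _ = pairF gc.1 + eExp E + (eExp gc.2 + eExp (rest.bind Prod.snd)) := by abel
  by_cases hE0 : E = 0
  · exfalso
    subst hE0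
    have hGs0 : Gs ≠ 0 := by intro h; rw [h] at hcard; simp at hcard
    obtain ⟨gc, hgc⟩ := Multiset.exists_mem_of_ne_zero hGs0
    exact h1 ⟨gc, hgc, le_trans (pairF_le_eExp (Multiset.mem_map_of_mem _ hgc))
      (by simpa using hdvd)⟩
  by_cases h2 : ∃ e ∈ E, eExp (Gs.map Prod.fst) ≤ F + eExp (E.erase e)
  · -- DEAD edge case
    obtain ⟨e, he, hle2⟩ := h2
    have hEe : E = e ::ₘ E.erase e := (Multiset.cons_erase he).symm
    have hlt : E.erase e < E := Multiset.erase_lt.mpr he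
    have hcard' : Multiset.card (E.erase e) < Multiset.card Gs := by
      have := Multiset.card_lt_card hlt; omega
    obtain ⟨F', hF'F, hdeg, H', hHadj, hHcard, hHle⟩ :=
      IH (E.erase e) hlt Gs F (fun p hp => hE p (Multiset.mem_of_mem_erase hp)) hGs hcard' hle2
    refine ⟨F', hF'F, hdeg, e ::ₘ H', ?_, ?_, ?_⟩
    · intro p hp
      rcases Multiset.mem_cons.mp hp with rfl | hp
      · exact hE _ he
      · exact hHadj p hp
    · rw [Multiset.card_cons, hHcard]
      have : Multiset.card E = Multiset.card (E.erase e) + 1 := by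
        conv_lhs => rw [hEe]
        simp
      omega
    · rw [eExp_cons]
      calc pairF e + eExp H' ≤ pairF e + (F' + eExp (E.erase e) + eExp (Gs.bind Prod.snd)) :=
            add_le_add_right hHle _
        _ = F' + (pairF e + eExp (E.erase e)) + eExp (Gs.bind Prod.snd) := by abel
        _ = F' + eExp E + eExp (Gs.bind Prod.snd) := by rw [← eExp_cons, ← hEe]
  -- MAIN case
  push_neg at h2
  obtain ⟨e₀, he₀⟩ := Multiset.exists_mem_of_ne_zero hE0
  set E₂ := E.erase e₀ with hE₂def
  have hEe : E = e₀ ::ₘ E₂ := (Multiset.cons_erase he₀).symm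
  have hne2 : ¬ (eExp (Gs.map Prod.fst) ≤ F + eExp E₂) := h2 e₀ he₀
  rw [Finsupp.le_def] at hne2
  push_neg at hne2
  obtain ⟨x, hx⟩ := hne2
  have hdvdx := Finsupp.le_def.mp hdvd x
  have hEx : eExp E = pairF e₀ + eExp E₂ := by rw [hEe, eExp_cons]
  have hxmem : x = e₀.1 ∨ x = e₀.2 := by
    by_contra hcon
    push_neg at hcon
    rw [hEx] at hdvdx
    simp only [Finsupp.add_apply, pairF_apply_of_not_mem hcon.1 hcon.2] at hdvdx
    simp only [Finsupp.add_apply] at hx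
    omega
  set c := x
  set c' := otherV e₀ x with hc'def
  have hpair : pairF e₀ = Finsupp.single c 1 + Finsupp.single c' 1 := pairF_eq_of_mem hxmem
  have hcc' : c ≠ c' := by
    have hne0 : e₀.1 ≠ e₀.2 := hne (hE e₀ he₀)
    rcases hxmem with h | h
    · rw [hc'def]; unfold otherV; rw [if_pos h, h]; exact hne0
    · rw [hc'def]; unfold otherV
      by_cases h1' : x = e₀.1
      · exact absurd (h1'.symm.trans h) hne0
      · rw [if_neg h1']
        exact h1'
  -- find gc containing c
  have hAc : eExp (Gs.map Prod.fst) c ≠ 0 := by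
    simp only [Finsupp.add_apply] at hx
    omega
  obtain ⟨q, hqmem, hq⟩ := exists_mem_of_eExp_pos hAc
  obtain ⟨gc, hgcmem, rfl⟩ := Multiset.mem_map.mp hqmem
  set Gs₂ := Gs.erase gc with hGs₂def
  have hGse : Gs = gc ::ₘ Gs₂ := (Multiset.cons_erase hgcmem).symm
  set u := otherV gc.1 c with hudef
  have hpg : pairF gc.1 = Finsupp.single c 1 + Finsupp.single u 1 := pairF_eq_of_mem hq
  have hAdec : eExp (Gs.map Prod.fst) = pairF gc.1 + eExp (Gs₂.map Prod.fst) := by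
    rw [hGse, Multiset.map_cons, eExp_cons]
  by_cases h4 : ∃ gc' ∈ Gs₂, c' = gc'.1.1 ∨ c' = gc'.1.2
  · -- PIVOT case
    obtain ⟨gc', hmem', hc'⟩ := h4
    set Gs₃ := Gs₂.erase gc' with hGs₃def
    have hGse2 : Gs₂ = gc' ::ₘ Gs₃ := (Multiset.cons_erase hmem').symm
    set v := otherV gc'.1 c' with hvdef
    have hpg' : pairF gc'.1 = Finsupp.single c' 1 + Finsupp.single v 1 := pairF_eq_of_mem hc'
    obtain ⟨hadjC, HxA, hHadjA, hHcardA, hHleA⟩ := hGs gc hgcmem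
    obtain ⟨hadjC', HxB, hHadjB, hHcardB, hHleB⟩ := hGs gc' (hGse ▸ Multiset.mem_cons_of_mem hmem')
    set newgc : (V × V) × Multiset (V × V) := ((u, v), e₀ ::ₘ (gc.2 + gc'.2)) with hnewdef
    set Gs' := newgc ::ₘ Gs₃ with hGs'def
    have hGs'inv : ∀ g ∈ Gs', (∀ p ∈ g.2, Adj p.1 p.2) ∧
        ∃ Hx : Multiset (V × V), (∀ p ∈ Hx, Adj p.1 p.2) ∧ Hx.card = g.2.card + 1 ∧
          eExp Hx ≤ pairF g.1 + eExp g.2 := by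
      intro g hg
      rcases Multiset.mem_cons.mp hg with rfl | hg
      · constructor
        · intro p hp
          rcases Multiset.mem_cons.mp hp with rfl | hp
          · exact hE _ he₀
          · rcases Multiset.mem_add.mp hp with hp | hp
            · exact hadjC p hp
            · exact hadjC' p hp
        · refine ⟨HxA + HxB, ?_, ?_, ?_⟩
          · intro p hp
            rcases Multiset.mem_add.mp hp with hp | hp
            · exact hHadjA p hp
            · exact hHadjB p hp
          · simp only [Multiset.card_add, hHcardA, hHcardB, hnewdef, Multiset.card_cons]
            ring
          · rw [eExp_add]
            calc eExp HxA + eExp HxB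
                ≤ (pairF gc.1 + eExp gc.2) + (pairF gc'.1 + eExp gc'.2) := add_le_add hHleA hHleB
              _ = pairF (u, v) + eExp (e₀ ::ₘ (gc.2 + gc'.2)) := by
                  rw [hpg, hpg', eExp_cons, eExp_add, hpair]
                  show _ = (Finsupp.single u 1 + Finsupp.single v 1) + _
                  abel
      · exact hGs g (by
          rw [hGse, hGse2]
          exact Multiset.mem_cons_of_mem (Multiset.mem_cons_of_mem hg))
    have hcard' : Multiset.card E₂ < Multiset.card Gs' := by
      have h1c : Multiset.card E = Multiset.card E₂ + 1 := by rw [hEe]; simp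
      have h2c : Multiset.card Gs = Multiset.card Gs₃ + 2 := by rw [hGse, hGse2]; simp
      have h3c : Multiset.card Gs' = Multiset.card Gs₃ + 1 := by rw [hGs'def]; simp
      omega
    have hdvd' : eExp (Gs'.map Prod.fst) ≤ F + eExp E₂ := by
      have hA'dec : eExp (Gs'.map Prod.fst)
          = pairF (u, v) + eExp (Gs₃.map Prod.fst) := by
        rw [hGs'def, Multiset.map_cons, eExp_cons]
      have hAdec2 : eExp (Gs.map Prod.fst)
          = pairF gc.1 + (pairF gc'.1 + eExp (Gs₃.map Prod.fst)) := by
        rw [hGse, hGse2, Multiset.map_cons, Multiset.map_cons, eExp_cons, eExp_cons]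
      have hdy := hdvd
      rw [hAdec2, hEx, hpg, hpg', hpair] at hdy
      have hpuv : pairF (u, v) = Finsupp.single u 1 + Finsupp.single v 1 := rfl
      rw [hA'dec, hpuv]
      have hdy' : (Finsupp.single c 1 + Finsupp.single c' 1)
            + (Finsupp.single u 1 + Finsupp.single v 1 + eExp (Gs₃.map Prod.fst))
          ≤ (Finsupp.single c 1 + Finsupp.single c' 1) + (F + eExp E₂) := by
        calc (Finsupp.single c 1 + Finsupp.single c' 1)
              + (Finsupp.single u 1 + Finsupp.single v 1 + eExp (Gs₃.map Prod.fst))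
            = (Finsupp.single c 1 + Finsupp.single u 1)
              + ((Finsupp.single c' 1 + Finsupp.single v 1) + eExp (Gs₃.map Prod.fst)) := by
              abel
          _ ≤ F + (Finsupp.single c 1 + Finsupp.single c' 1 + eExp E₂) := hdy
          _ = (Finsupp.single c 1 + Finsupp.single c' 1) + (F + eExp E₂) := by abel
      exact le_of_add_le_add_left hdy'
    obtain ⟨F', hF'F, hdeg, H', hHadj, hHcard, hHle⟩ :=
      IH E₂ (Multiset.erase_lt.mpr he₀) Gs' F
        (fun p hp => hE p (Multiset.mem_of_mem_erase hp)) hGs'inv hcard' hdvd'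
    refine ⟨F', hF'F, hdeg, H', hHadj, ?_, ?_⟩
    · have hb1 : Gs'.bind Prod.snd = (e₀ ::ₘ (gc.2 + gc'.2)) + Gs₃.bind Prod.snd := by
        rw [hGs'def, Multiset.cons_bind]
      have hb2 : Gs.bind Prod.snd = gc.2 + (gc'.2 + Gs₃.bind Prod.snd) := by
        rw [hGse, hGse2, Multiset.cons_bind, Multiset.cons_bind]
      have h1c : Multiset.card E = Multiset.card E₂ + 1 := by rw [hEe]; simp
      rw [hHcard, hb1]
      rw [hb2]
      simp only [Multiset.card_add, Multiset.card_cons]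
      omega
    · have hb1 : Gs'.bind Prod.snd = (e₀ ::ₘ (gc.2 + gc'.2)) + Gs₃.bind Prod.snd := by
        rw [hGs'def, Multiset.cons_bind]
      have hb2 : Gs.bind Prod.snd = gc.2 + (gc'.2 + Gs₃.bind Prod.snd) := by
        rw [hGse, hGse2, Multiset.cons_bind, Multiset.cons_bind]
      calc eExp H' ≤ F' + eExp E₂ + eExp (Gs'.bind Prod.snd) := hHle
        _ = F' + eExp E + eExp (Gs.bind Prod.snd) := by
            rw [hb1, hb2, hEx]
            simp only [eExp_add, eExp_cons]
            abel
  · -- UNIFIED remove case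
    push_neg at h4
    have hA₂c' : eExp (Gs₂.map Prod.fst) c' = 0 := by
      by_contra hcon
      obtain ⟨q, hqmem, hq'⟩ := exists_mem_of_eExp_pos hcon
      obtain ⟨gc', hgc', rfl⟩ := Multiset.mem_map.mp hqmem
      rcases hq' with h | h
      · exact (h4 gc' hgc').1 h
      · exact (h4 gc' hgc').2 h
    have hdvd' : eExp (Gs₂.map Prod.fst) ≤ F + eExp E₂ := by
      rw [Finsupp.le_def]
      intro y
      have hdy : pairF gc.1 y + eExp (Gs₂.map Prod.fst) y
          ≤ F y + (pairF e₀ y + eExp E₂ y) := by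
        have := Finsupp.le_def.mp hdvd y
        rw [hAdec, hEx] at this
        simpa [Finsupp.add_apply] using this
      have hgoal : eExp (Gs₂.map Prod.fst) y ≤ F y + eExp E₂ y → _ := fun h => by
        simpa [Finsupp.add_apply] using h
      apply hgoal
      by_cases hyc : y = c
      · subst hyc
        have h1' : 1 ≤ pairF gc.1 y := by
          rw [hpg]; simp [Finsupp.add_apply, Finsupp.single_apply, show c = y from rfl]
        have h2' : pairF e₀ y = 1 := by
          rw [hpair]; simp [Finsupp.add_apply, Finsupp.single_apply, Ne.symm hcc', show c = y from rfl, show c' ≠ y from Ne.symm hcc']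
        omega
      · by_cases hyc' : y = c'
        · subst hyc'
          rw [hA₂c']
          omega
        · have h2' : pairF e₀ y = 0 := by
            rw [hpair]
            simp [Finsupp.add_apply, Finsupp.single_apply, Ne.symm hyc, Ne.symm hyc']
          omega
    have hcard' : Multiset.card E₂ < Multiset.card Gs₂ := by
      have h1c : Multiset.card E = Multiset.card E₂ + 1 := by rw [hEe]; simp
      have h2c : Multiset.card Gs = Multiset.card Gs₂ + 1 := by rw [hGse]; simp
      omega
    obtain ⟨hadjC, HxA, hHadjA, hHcardA, hHleA⟩ := hGs gc hgcmem
    obtain ⟨F', hF'F, hdeg, H', hHadj, hHcard, hHle⟩ :=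
      IH E₂ (Multiset.erase_lt.mpr he₀) Gs₂ F
        (fun p hp => hE p (Multiset.mem_of_mem_erase hp))
        (fun g hg => hGs g (by rw [hGse]; exact Multiset.mem_cons_of_mem hg)) hcard' hdvd'
    refine ⟨F', hF'F, hdeg, e₀ ::ₘ (gc.2 + H'), ?_, ?_, ?_⟩
    · intro p hp
      rcases Multiset.mem_cons.mp hp with rfl | hp
      · exact hE _ he₀
      · rcases Multiset.mem_add.mp hp with hp | hp
        · exact hadjC p hp
        · exact hHadj p hp
    · have hb2 : Gs.bind Prod.snd = gc.2 + Gs₂.bind Prod.snd := by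
        rw [hGse, Multiset.cons_bind]
      have h1c : Multiset.card E = Multiset.card E₂ + 1 := by rw [hEe]; simp
      rw [hb2]
      simp only [Multiset.card_cons, Multiset.card_add, hHcard]
      omega
    · have hb2 : Gs.bind Prod.snd = gc.2 + Gs₂.bind Prod.snd := by
        rw [hGse, Multiset.cons_bind]
      rw [eExp_cons, eExp_add, hb2, hEx]
      calc pairF e₀ + (eExp gc.2 + eExp H')
          ≤ pairF e₀ + (eExp gc.2 + (F' + eExp E₂ + eExp (Gs₂.bind Prod.snd))) := by
            exact add_le_add_right (add_le_add_right hHle _) _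
        _ = F' + (pairF e₀ + eExp E₂) + (eExp gc.2 + eExp (Gs₂.bind Prod.snd)) := by abel
        _ = F' + (pairF e₀ + eExp E₂) + eExp (gc.2 + Gs₂.bind Prod.snd) := by rw [eExp_add]

lemma prod_X_eq {A : Type*} (s : Finset A) (g : A → V) :
    (∏ i ∈ s, (X (g i) : MvPolynomial V k)) =
      monomial (∑ i ∈ s, Finsupp.single (g i) 1) 1 := by
  classical
  induction s using Finset.induction with
  | empty => simp [monomial_zero', C_1]
  | insert _ _ hnotmem ih =>
    rw [Finset.prod_insert hnotmem, Finset.sum_insert hnotmem, ih, X, monomial_mul, one_mul]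

lemma zmod_sum_reindex {M : Type*} [AddCommMonoid M] (n : ℕ) [NeZero n] (f : ZMod n → M) :
    ∑ i : ZMod n, f i = ∑ j ∈ Finset.range n, f (j : ZMod n) := by
  refine Finset.sum_nbij' (fun a => a.val) (fun a => (a : ZMod n)) ?_ ?_ ?_ ?_ ?_
  · intro a _
    exact Finset.mem_range.mpr (ZMod.val_lt a)
  · intro a _
    exact Finset.mem_univ _
  · intro a _
    exact ZMod.natCast_rightInverse a
  · intro a ha
    exact ZMod.val_cast_of_lt (Finset.mem_range.mp ha)
  · intro a _
    rw [ZMod.natCast_rightInverse a]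

lemma pair_sum_reindex {M : Type*} [AddCommMonoid M] (g : ℕ → M) (m : ℕ) :
    ∑ i ∈ Finset.range (2 * m), g i = ∑ j ∈ Finset.range m, (g (2 * j) + g (2 * j + 1)) := by
  induction m with
  | zero => simp
  | succ n ih =>
    have h2 : 2 * (n + 1) = (2 * n + 1) + 1 := by ring
    rw [h2, Finset.sum_range_succ, Finset.sum_range_succ, ih, Finset.sum_range_succ]
    abel

/-- matching edges of an odd cycle -/
def matchM (l : ℕ) (c : ZMod (2 * l + 1) → V) : Multiset (V × V) :=
  (Multiset.range l).map fun j =>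
    (c ((2 * j : ℕ) : ZMod (2 * l + 1)), c ((2 * j + 1 : ℕ) : ZMod (2 * l + 1)))

lemma matchM_card (l : ℕ) (c : ZMod (2 * l + 1) → V) : Multiset.card (matchM l c) = l := by
  simp [matchM]

lemma matchM_adj {G : SimpleGraph V} {l : ℕ} {c : ZMod (2 * l + 1) → V}
    (hc : ∀ i, G.Adj (c i) (c (i + 1))) :
    ∀ p ∈ matchM l c, G.Adj p.1 p.2 := by
  intro p hp
  obtain ⟨j, _, rfl⟩ := Multiset.mem_map.mp hp
  have := hc ((2 * j : ℕ) : ZMod (2 * l + 1))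
  have hcast : ((2 * j : ℕ) : ZMod (2 * l + 1)) + 1 = ((2 * j + 1 : ℕ) : ZMod (2 * l + 1)) := by
    push_cast
    ring
  rw [hcast] at this
  exact this

lemma cycle_exp_decomp (l : ℕ) (c : ZMod (2 * l + 1) → V) :
    ∑ i : ZMod (2 * l + 1), Finsupp.single (c i) (1 : ℕ)
      = eExp (matchM l c) + Finsupp.single (c ((2 * l : ℕ) : ZMod (2 * l + 1))) 1 := by
  haveI : NeZero (2 * l + 1) := ⟨Nat.succ_ne_zero _⟩
  rw [zmod_sum_reindex]
  rw [Finset.sum_range_succ]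
  congr 1
  rw [pair_sum_reindex (fun i => Finsupp.single (c ((i : ℕ) : ZMod (2 * l + 1))) 1) l]
  unfold eExp matchM
  rw [Multiset.map_map]
  rfl

/-- exponents of s-fold edge products -/
def powExps (G : SimpleGraph V) (s : ℕ) : Set (V →₀ ℕ) :=
  {d | ∃ L : Multiset (V × V), (∀ p ∈ L, G.Adj p.1 p.2) ∧ Multiset.card L = s ∧ d = eExp L}

lemma X_mul_X_eq (u v : V) : (X u * X v : MvPolynomial V k) = monomial (pairF (u, v)) 1 := by
  rw [X, X, monomial_mul, one_mul]
  rfl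

lemma edgeIdeal_eq' (G : SimpleGraph V) :
    edgeIdeal k G = Ideal.span ((fun d => monomial d (1 : k)) '' powExps G 1) := by
  unfold edgeIdeal
  congr 1
  ext f
  constructor
  · rintro ⟨u, v, huv, rfl⟩
    refine ⟨pairF (u, v), ⟨{(u, v)}, by simpa using huv, by simp, by simp [eExp]⟩,
      (X_mul_X_eq u v).symm⟩
  · rintro ⟨d, ⟨L, hadj, hcard, rfl⟩, rfl⟩
    obtain ⟨p, rfl⟩ := Multiset.card_eq_one.mp hcard
    refine ⟨p.1, p.2, by simpa using hadj, ?_⟩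
    rw [X_mul_X_eq]
    congr 1
    simp [eExp]

lemma edgeIdeal_pow_eq' (G : SimpleGraph V) (s : ℕ) :
    edgeIdeal k G ^ s = Ideal.span ((fun d => monomial d (1 : k)) '' powExps G s) := by
  induction s with
  | zero =>
    rw [pow_zero]
    have : powExps G 0 = {(0 : V →₀ ℕ)} := by
      ext d
      constructor
      · rintro ⟨L, _, hcard, rfl⟩
        rw [Multiset.card_eq_zero] at hcard
        simp [hcard]
      · rintro rfl
        exact ⟨0, by simp, by simp, by simp⟩
    rw [this]
    simp only [Set.image_singleton]
    rw [monomial_zero', C_1]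
    rw [Ideal.span_singleton_one, Ideal.one_eq_top]
  | succ n ih =>
    rw [pow_succ, ih, edgeIdeal_eq', Ideal.span_mul_span']
    congr 1
    ext f
    constructor
    · rintro ⟨a, ⟨d₁, ⟨L₁, hadj₁, hcard₁, rfl⟩, rfl⟩, b, ⟨d₂, ⟨L₂, hadj₂, hcard₂, rfl⟩, rfl⟩, rfl⟩
      refine ⟨eExp (L₁ + L₂), ⟨L₁ + L₂, ?_, by simp [hcard₁, hcard₂], rfl⟩, ?_⟩
      · intro p hp
        rcases Multiset.mem_add.mp hp with hp | hp
        · exact hadj₁ p hp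
        · exact hadj₂ p hp
      · show _ = monomial (eExp L₁) (1:k) * monomial (eExp L₂) 1
        rw [monomial_mul, one_mul, eExp_add]
    · rintro ⟨d, ⟨L, hadj, hcard, rfl⟩, rfl⟩
      have hL0 : L ≠ 0 := by
        intro h
        rw [h] at hcard
        simp at hcard
      obtain ⟨p, hp⟩ := Multiset.exists_mem_of_ne_zero hL0
      obtain ⟨L', rfl⟩ := Multiset.exists_cons_of_mem hp
      refine ⟨monomial (eExp L') 1, ⟨eExp L', ⟨L', fun q hq => hadj q (Multiset.mem_cons_of_mem hq),
          by simp at hcard; omega, rfl⟩, rfl⟩,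
        monomial (pairF p) 1, ⟨pairF p, ⟨{p}, by simpa using hadj p hp, by simp, by simp [eExp]⟩, rfl⟩, ?_⟩
      show monomial (eExp L') (1:k) * monomial (pairF p) 1 = monomial (eExp (p ::ₘ L')) (1:k)
      rw [monomial_mul, one_mul, eExp_cons, add_comm]

lemma mem_pow_monomial (G : SimpleGraph V) (s : ℕ) (d : V →₀ ℕ) :
    monomial d (1 : k) ∈ edgeIdeal k G ^ s ↔
      ∃ L : Multiset (V × V), (∀ p ∈ L, G.Adj p.1 p.2) ∧ Multiset.card L = s ∧ eExp L ≤ d := by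
  classical
  rw [edgeIdeal_pow_eq', mem_ideal_span_monomial_image]
  constructor
  · intro h
    have hd : d ∈ (monomial d (1 : k)).support := by
      rw [support_monomial, if_neg one_ne_zero]
      exact Finset.mem_singleton_self d
    obtain ⟨si, ⟨L, hadj, hcard, rfl⟩, hle⟩ := h d hd
    exact ⟨L, hadj, hcard, hle⟩
  · rintro ⟨L, hadj, hcard, hle⟩ m hm
    rw [support_monomial, if_neg one_ne_zero, Finset.mem_singleton] at hm
    subst hm
    exact ⟨eExp L, ⟨L, hadj, hcard, rfl⟩, hle⟩

lemma mem_pow_iff_support (G : SimpleGraph V) (s : ℕ) (f : MvPolynomial V k) :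
    f ∈ edgeIdeal k G ^ s ↔
      ∀ a ∈ f.support, ∃ L : Multiset (V × V),
        (∀ p ∈ L, G.Adj p.1 p.2) ∧ Multiset.card L = s ∧ eExp L ≤ a := by
  rw [edgeIdeal_pow_eq', mem_ideal_span_monomial_image]
  constructor
  · intro h a ha
    obtain ⟨si, ⟨L, hadj, hcard, rfl⟩, hle⟩ := h a ha
    exact ⟨L, hadj, hcard, hle⟩
  · intro h a ha
    obtain ⟨L, hadj, hcard, hle⟩ := h a ha
    exact ⟨eExp L, ⟨L, hadj, hcard, rfl⟩, hle⟩



lemma bind_snd_zero (L : Multiset (V × V)) :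
    (L.map fun g => (g, (0 : Multiset (V × V)))).bind Prod.snd = 0 := by
  induction L using Multiset.induction with
  | empty => rfl
  | cons p L ih => rw [Multiset.map_cons, Multiset.cons_bind, ih]; rfl

/-- degree reduction for the colon ideal: Banerjee's theorem applied to our setting -/
lemma red {G : SimpleGraph V} [DecidableEq V] {s : ℕ} (hs1 : 1 ≤ s)
    (E₀ : Multiset (V × V)) (hE₀ : ∀ p ∈ E₀, G.Adj p.1 p.2)
    (hcard : Multiset.card E₀ = s - 1) (ρ D : V →₀ ℕ) (hD : D = eExp E₀ + ρ)
    (a : V →₀ ℕ) (h : monomial (a + D) (1 : k) ∈ edgeIdeal k G ^ s) :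
    ∃ d' ≤ a, degF d' ≤ 2 ∧ monomial (d' + D) (1 : k) ∈ edgeIdeal k G ^ s := by
  obtain ⟨L, hLadj, hLcard, hLle⟩ := (mem_pow_monomial (k := k) G s _).mp h
  have hdvd : eExp ((L.map fun g => (g, (0 : Multiset (V × V)))).map Prod.fst)
      ≤ (a + ρ) + eExp E₀ := by
    rw [Multiset.map_map]
    have hid : (Prod.fst ∘ fun g : V × V => (g, (0 : Multiset (V × V)))) = id := rfl
    rw [hid, Multiset.map_id]
    calc eExp L ≤ a + D := hLle
      _ = (a + ρ) + eExp E₀ := by rw [hD]; abel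
  obtain ⟨F', hF'le, hdeg, H, hHadj, hHcard, hHle⟩ :=
    core G.Adj (fun h => h.ne) E₀ (L.map fun g => (g, 0)) (a + ρ) hE₀
      (by
        intro gc hgc
        obtain ⟨g, hg, rfl⟩ := Multiset.mem_map.mp hgc
        exact ⟨fun p hp => by simp at hp,
          {g}, by simpa using hLadj g hg, by simp, by simp [eExp]⟩)
      (by rw [Multiset.card_map, hLcard, hcard]; omega)
      hdvd
  rw [bind_snd_zero] at hHcard hHle
  simp only [Multiset.card_zero, add_zero] at hHcard
  refine ⟨F' - ρ, ?_, le_trans (degF_mono tsub_le_self) hdeg, ?_⟩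
  · exact tsub_le_iff_right.mpr hF'le
  · refine (mem_pow_monomial (k := k) G s _).mpr ⟨H, hHadj, by rw [hHcard, hcard]; omega, ?_⟩
    calc eExp H ≤ F' + eExp E₀ + eExp 0 := hHle
      _ = F' + eExp E₀ := by simp
      _ ≤ ((F' - ρ) + ρ) + eExp E₀ := add_le_add_left le_tsub_add _
      _ = (F' - ρ) + D := by rw [hD, add_assoc, add_comm ρ (eExp E₀)]

lemma min_sel (P : (V →₀ ℕ) → Prop) :
    ∀ N a, degF a ≤ N → P a → ∃ d, (P d ∧ ∀ d₂, P d₂ → d₂ ≤ d → d₂ = d) ∧ d ≤ a := by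
  intro N
  induction N with
  | zero =>
    intro a ha hPa
    refine ⟨a, ⟨hPa, fun d₂ _ hle => ?_⟩, le_refl a⟩
    have ha0 : a = 0 := degF_eq_zero (Nat.le_zero.mp ha)
    subst ha0
    exact le_antisymm hle (zero_le : 0 ≤ d₂)
  | succ N ih =>
    intro a ha hPa
    by_cases hmin : ∀ d₂, P d₂ → d₂ ≤ a → d₂ = a
    · exact ⟨a, ⟨hPa, hmin⟩, le_refl a⟩
    · push_neg at hmin
      obtain ⟨d₂, hP2, hle2, hne2⟩ := hmin
      have hdeg : degF d₂ < degF a :=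
        lt_of_le_of_ne (degF_mono hle2) (fun h => hne2 (eq_of_le_of_degF_eq hle2 h))
      obtain ⟨d, hd, hle⟩ := ih d₂ (by omega) hP2
      exact ⟨d, hd, le_trans hle hle2⟩


lemma colon_structure (G : SimpleGraph V) (s : ℕ) (hs1 : 1 ≤ s)
    (E₀ : Multiset (V × V)) (hE₀ : ∀ p ∈ E₀, G.Adj p.1 p.2)
    (hcard : Multiset.card E₀ = s - 1) (ρ D : V →₀ ℕ) (hD : D = eExp E₀ + ρ) :
    ∃ S : Set (MvPolynomial V k),
      (∀ f ∈ S, ∃ d : V →₀ ℕ, f = monomial d 1 ∧ (d.sum fun _ e => e) ≤ 2) ∧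
      Submodule.colon (edgeIdeal k G ^ s) (Ideal.span {monomial D (1 : k)}) = Ideal.span S ∧
      (∀ f ∈ S, f ∉ Ideal.span (S \ {f})) := by
  classical
  set P : (V →₀ ℕ) → Prop :=
    fun d => degF d ≤ 2 ∧ monomial (d + D) (1 : k) ∈ edgeIdeal k G ^ s with hPdef
  set T' : Set (V →₀ ℕ) := {d | P d ∧ ∀ d₂, P d₂ → d₂ ≤ d → d₂ = d} with hT'def
  have hmono_inj : Function.Injective fun d : V →₀ ℕ => monomial d (1 : k) :=
    monomial_left_injective one_ne_zero
  have hcolon : ∀ f : MvPolynomial V k,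
      f ∈ Submodule.colon (edgeIdeal k G ^ s) (Ideal.span {monomial D (1 : k)}) ↔
        f * monomial D 1 ∈ edgeIdeal k G ^ s := by
    intro f
    exact Iff.trans Submodule.mem_colon_span_singleton (by rw [smul_eq_mul])
  refine ⟨(fun d => monomial d (1 : k)) '' T', ?_, ?_, ?_⟩
  · rintro f ⟨d, hd, rfl⟩
    exact ⟨d, rfl, hd.1.1⟩
  · apply le_antisymm
    · intro f hf
      rw [hcolon] at hf
      rw [mem_ideal_span_monomial_image]
      intro a ha
      have hsupp : a + D ∈ (f * monomial D (1 : k)).support := by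
        rw [MvPolynomial.mem_support_iff, coeff_mul_monomial, mul_one]
        exact MvPolynomial.mem_support_iff.mp ha
      obtain ⟨L, hLadj, hLcard, hLle⟩ := (mem_pow_iff_support G s _).mp hf _ hsupp
      have hmem : monomial (a + D) (1 : k) ∈ edgeIdeal k G ^ s :=
        (mem_pow_monomial G s _).mpr ⟨L, hLadj, hLcard, hLle⟩
      obtain ⟨d', hd'le, hd'deg, hd'mem⟩ := red hs1 E₀ hE₀ hcard ρ D hD a hmem
      obtain ⟨d'', ⟨hPd'', hmin⟩, hle''⟩ := min_sel P 2 d' hd'deg ⟨hd'deg, hd'mem⟩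
      exact ⟨d'', ⟨hPd'', hmin⟩, le_trans hle'' hd'le⟩
    · rw [Ideal.span_le]
      rintro f ⟨d, hd, rfl⟩
      rw [SetLike.mem_coe, hcolon, monomial_mul, one_mul]
      exact hd.1.2
  · rintro f ⟨d, hd, rfl⟩ hcontra
    have himg : ((fun d => monomial d (1 : k)) '' T') \ {monomial d 1}
        = (fun d => monomial d (1 : k)) '' (T' \ {d}) := by
      rw [Set.image_diff hmono_inj, Set.image_singleton]
    rw [himg, mem_ideal_span_monomial_image] at hcontra
    have hdsupp : d ∈ (monomial d (1 : k)).support := by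
      rw [support_monomial, if_neg one_ne_zero]
      exact Finset.mem_singleton_self d
    obtain ⟨si, hsi, hsile⟩ := hcontra d hdsupp
    exact hsi.2 (hd.2 si hsi.1.1 hsile)

end Stmt14Aux

open Stmt14Aux in

/-- For an odd bicyclic graph with unique bow `B` of size `m+n+1`, `s > m+n+1`
and a minimal monomial generator `u` of `I(G)^{s-m-n-1}` with `m_B·u ∉ I(G)ˢ`, the colon ideal
`I(G)ˢ : (m_B u)` is minimally generated by monomials of degree at most two. -/
theorem stmt14 (k : Type*) [Field k] {V : Type*} (G : SimpleGraph V)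
    (m n : ℕ)
    (c₁ : ZMod (2 * m + 1) → V) (c₂ : ZMod (2 * n + 1) → V)
    (hbow : IsBow G c₁ c₂)
    (hbicyclic : ∀ (l : ℕ) (d : ZMod (2 * l + 1) → V), IsCycleMap G (2 * l + 1) d →
      Set.range d = Set.range c₁ ∨ Set.range d = Set.range c₂)
    (s : ℕ) (hs : m + n + 1 < s)
    (u : MvPolynomial V k) (hu : ∃ d : V →₀ ℕ, u = monomial d 1)
    (humem : u ∈ edgeIdeal k G ^ (s - (m + n + 1)))
    (humin : ∀ v : MvPolynomial V k, (∃ d : V →₀ ℕ, v = monomial d 1) →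
      v ∈ edgeIdeal k G ^ (s - (m + n + 1)) → v ∣ u → v = u)
    (hnot : ((∏ i : ZMod (2 * m + 1), X (c₁ i)) *
        ∏ j : ZMod (2 * n + 1), X (c₂ j) : MvPolynomial V k) * u ∉ edgeIdeal k G ^ s) :
    ∃ S : Set (MvPolynomial V k),
      (∀ f ∈ S, ∃ d : V →₀ ℕ, f = monomial d 1 ∧ (d.sum fun _ e => e) ≤ 2) ∧
      Submodule.colon (edgeIdeal k G ^ s)
        (Ideal.span {((∏ i : ZMod (2 * m + 1), X (c₁ i)) *
            ∏ j : ZMod (2 * n + 1), X (c₂ j) : MvPolynomial V k) * u}) = Ideal.span S ∧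
      (∀ f ∈ S, f ∉ Ideal.span (S \ {f})) := by
  classical
  obtain ⟨du, rfl⟩ := hu
  obtain ⟨⟨hinj₁, hadjc₁⟩, ⟨hinj₂, hadjc₂⟩, hdisj, hnadj⟩ := hbow
  obtain ⟨Lu, hLuadj, hLucard, hLule⟩ := (mem_pow_monomial (k := k) G _ du).mp humem
  have hs1 : 1 ≤ s := by omega
  have hw : ((∏ i : ZMod (2 * m + 1), X (c₁ i)) *
        ∏ j : ZMod (2 * n + 1), X (c₂ j) : MvPolynomial V k) * monomial du 1 =
      monomial ((∑ i : ZMod (2 * m + 1), Finsupp.single (c₁ i) 1)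
        + (∑ j : ZMod (2 * n + 1), Finsupp.single (c₂ j) 1) + du) 1 := by
    rw [prod_X_eq, prod_X_eq, monomial_mul, monomial_mul, one_mul, one_mul]
  rw [hw]
  refine colon_structure G s hs1 (matchM m c₁ + matchM n c₂ + Lu) ?_ ?_
    ((du - eExp Lu) + Finsupp.single (c₁ ((2 * m : ℕ) : ZMod (2 * m + 1))) 1
      + Finsupp.single (c₂ ((2 * n : ℕ) : ZMod (2 * n + 1))) 1) _ ?_
  · intro p hp
    rcases Multiset.mem_add.mp hp with hp | hp
    · rcases Multiset.mem_add.mp hp with hp | hp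
      · exact matchM_adj hadjc₁ p hp
      · exact matchM_adj hadjc₂ p hp
    · exact hLuadj p hp
  · simp only [Multiset.card_add, matchM_card, hLucard]
    omega
  · have h1 := cycle_exp_decomp m c₁
    have h2 := cycle_exp_decomp n c₂
    rw [h1, h2, eExp_add, eExp_add]
    ext x
    have hx : eExp Lu x ≤ du x := Finsupp.le_def.mp hLule x
    simp only [Finsupp.add_apply, Finsupp.tsub_apply]
    omega
end
end
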